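/- arXiv:2510.08187 — 6 statements merged into one kernel-verified Lean document; each statement's English description precedes it below -/
import Mathlib

section
/- Let J ⊆ ℝ be a nonempty open interval, x : J → ℝᵈ a continuous curve, and for each t ∈ J let ⋈ₜ be the synchrony pattern of x(t) (the partition of cells by equality of components). Then there exists a nonempty open subinterval J₀ ⊆ J on which t ↦ ⋈ₜ is constant. -/
open Filter Set

/-- For a continuous curve `x` on a nonempty open interval `J ⊆ ℝ` with values
in a product of cell state spaces `ℝ^{d c}`, there is a nonempty open subinterval `J₀ ⊆ J`
on which the synchrony pattern `t ↦ ⋈ₜ` (where `c ⋈ₜ c'` iff `x_c t = x_{c'} t`, cells being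
comparable when their dimensions agree) is constant. -/
theorem stmt_1 {C : Type*} [Fintype C] {d : C → ℕ}
    (J : Set ℝ) (hJo : IsOpen J) (hJne : J.Nonempty) (hJc : J.OrdConnected)
    (x : ℝ → Π c : C, (Fin (d c) → ℝ)) (hx : ContinuousOn x J) :
    ∃ a b : ℝ, a < b ∧ Set.Ioo a b ⊆ J ∧
      ∀ t ∈ Set.Ioo a b, ∀ s ∈ Set.Ioo a b, ∀ c c' : C, ∀ h : d c = d c',
        ((∀ i, x t c i = x t c' (Fin.cast h i)) ↔
          (∀ i, x s c i = x s c' (Fin.cast h i))) := by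
  classical
  -- `F t` : the set of comparable pairs that are NOT synchronized at time `t`.
  set F : ℝ → Finset (C × C) := fun t =>
    Finset.univ.filter
      (fun p => ∃ h : d p.1 = d p.2, ¬ ∀ i, x t p.1 i = x t p.2 (Fin.cast h i)) with hF
  obtain ⟨t₀, ht₀J⟩ := hJne
  set N : Set ℕ := {n | ∃ t ∈ J, (F t).card = n} with hN
  have hNne : N.Nonempty := ⟨_, t₀, ht₀J, rfl⟩
  have hNbdd : BddAbove N := by
    refine ⟨Fintype.card (C × C), ?_⟩
    rintro n ⟨t, _, rfl⟩
    simpa using Finset.card_filter_le (Finset.univ : Finset (C × C)) _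
  obtain ⟨t₁, ht₁J, ht₁⟩ : ∃ t ∈ J, (F t).card = sSup N := Nat.sSup_mem hNne hNbdd
  have hxat : ContinuousAt x t₁ := hx.continuousAt (hJo.mem_nhds ht₁J)
  -- every inequality present at `t₁` persists on a neighborhood
  have h2 : ∀ p ∈ F t₁, ∀ᶠ t in nhds t₁, p ∈ F t := by
    intro p hp
    simp only [hF, Finset.mem_filter, Finset.mem_univ, true_and] at hp ⊢
    obtain ⟨h, hne⟩ := hp
    push_neg at hne
    obtain ⟨i, hi⟩ := hne
    have hc : ContinuousAt (fun t => x t p.1 i - x t p.2 (Fin.cast h i)) t₁ :=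
      ((((continuous_apply i).comp (continuous_apply p.1)).continuousAt).comp hxat).sub
        ((((continuous_apply (Fin.cast h i)).comp (continuous_apply p.2)).continuousAt).comp hxat)
    have hev : ∀ᶠ t in nhds t₁, x t p.1 i - x t p.2 (Fin.cast h i) ≠ 0 :=
      hc.eventually_ne (sub_ne_zero.mpr hi)
    filter_upwards [hev] with t ht
    exact ⟨h, fun hall => ht (sub_eq_zero.mpr (hall i))⟩
  have hev : ∀ᶠ t in nhds t₁, t ∈ J ∧ ∀ p ∈ F t₁, p ∈ F t := by
    filter_upwards [hJo.mem_nhds ht₁J, (Filter.eventually_all_finset (F t₁)).2 h2] with t h1 h2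
    exact ⟨h1, h2⟩
  obtain ⟨a, b, hmem, hIoo⟩ := mem_nhds_iff_exists_Ioo_subset.1 hev
  refine ⟨a, b, hmem.1.trans hmem.2, fun t ht => (hIoo ht).1, ?_⟩
  have key : ∀ u ∈ Set.Ioo a b, ∀ c c' : C, ∀ h : d c = d c',
      ((∀ i, x u c i = x u c' (Fin.cast h i)) ↔ (c, c') ∉ F t₁) := by
    intro u hu c c' h
    obtain ⟨huJ, hsub⟩ := hIoo hu
    have hcard : (F u).card ≤ (F t₁).card := by
      rw [ht₁]; exact le_csSup hNbdd ⟨u, huJ, rfl⟩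
    have heq : F t₁ = F u := Finset.eq_of_subset_of_card_le hsub hcard
    rw [heq]
    simp only [hF, Finset.mem_filter, Finset.mem_univ, true_and, not_exists, not_not]
    exact ⟨fun hall _ => hall, fun hall => hall h⟩
  intro t ht s hs c c' h
  rw [key t ht c c' h, key s hs c c' h]
end

section
/- Let X and Y be Banach spaces, L : X → Y a left-Fredholm operator with splitting Y = R(L) ⊕ Y₂ and corresponding continuous projection p onto Y₂. Suppose Z ⊆ Y is a subspace such that there exists κ > 0 with ‖p(z)‖ ≥ κ‖z‖ for all z ∈ Z. Then for any compact operator K : X → Y, the subspace Z ∩ R(L + K) is finite-dimensional. -/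
open Metric Set Filter NNReal Topology

lemma aux_bddBelow {E F : Type*} [NormedAddCommGroup E] [NormedSpace ℝ E] [CompleteSpace E]
    [NormedAddCommGroup F] [NormedSpace ℝ F] [CompleteSpace F]
    (f : E →L[ℝ] F) (S : Submodule ℝ E) (hS : IsClosed (S : Set E))
    (hinj : ∀ x ∈ S, f x = 0 → x = 0)
    (him : IsClosed (f '' (S : Set E))) :
    ∃ c > 0, ∀ x ∈ S, c * ‖x‖ ≤ ‖f x‖ := by
  have : CompleteSpace S := hS.completeSpace_coe
  set T : Submodule ℝ F := S.map (f : E →ₗ[ℝ] F) with hT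
  have hTc : IsClosed (T : Set F) := by
    simpa [hT, Submodule.map_coe] using him
  have : CompleteSpace T := hTc.completeSpace_coe
  have hmem : ∀ x : S, f x ∈ T := fun x => ⟨x, x.2, rfl⟩
  set g : S →L[ℝ] T := (f.comp S.subtypeL).codRestrict T hmem with hg
  have hker : LinearMap.ker (g : S →ₗ[ℝ] T) = ⊥ := by
    rw [LinearMap.ker_eq_bot']
    intro x hx
    have : f x = 0 := congrArg Subtype.val hx
    exact Subtype.ext (hinj x x.2 this)
  have hrange : LinearMap.range (g : S →ₗ[ℝ] T) = ⊤ := by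
    rw [LinearMap.range_eq_top]
    rintro ⟨y, x, hx, rfl⟩
    exact ⟨⟨x, hx⟩, rfl⟩
  set e := ContinuousLinearEquiv.ofBijective g hker hrange with he
  have halip := e.antilipschitz
  set c : ℝ≥0 := ‖(e.symm : ↥T →L[ℝ] ↥S)‖₊ with hc
  refine ⟨((c : ℝ) + 1)⁻¹, by positivity, fun x hx => ?_⟩
  have h1 : ‖(⟨x, hx⟩ : S)‖ ≤ c * ‖e ⟨x, hx⟩‖ := by
    simpa using halip.le_mul_dist ⟨x, hx⟩ 0
  have h2 : ‖e ⟨x, hx⟩‖ = ‖f x‖ := by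
    have : ((e ⟨x, hx⟩ : T) : F) = f x := rfl
    rw [← this]; rfl
  have h3 : ‖(⟨x, hx⟩ : S)‖ = ‖x‖ := rfl
  rw [h2, h3] at h1
  rw [inv_mul_le_iff₀ (by positivity)]
  calc ‖x‖ ≤ (c : ℝ) * ‖f x‖ := h1
    _ ≤ ((c : ℝ) + 1) * ‖f x‖ :=
        mul_le_mul_of_nonneg_right (by linarith) (norm_nonneg _)


lemma aux_compact_subseq {E F : Type*} [NormedAddCommGroup E] [NormedSpace ℝ E]
    [NormedAddCommGroup F] [NormedSpace ℝ F]
    (K : E →L[ℝ] F) (hK : IsCompactOperator K) (x : ℕ → E) {C : ℝ}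
    (hx : ∀ n, ‖x n‖ ≤ C) :
    ∃ φ : ℕ → ℕ, StrictMono φ ∧ ∃ y, Tendsto (fun n => K (x (φ n))) atTop (𝓝 y) := by
  obtain ⟨M, hM, hsub⟩ :=
    IsCompactOperator.image_closedBall_subset_compact (𝕜₁ := ℝ) (f := (K : E →ₗ[ℝ] F)) hK (C + 1)
  have hmem : ∀ n, K (x n) ∈ M := fun n =>
    hsub ⟨x n, by simpa [mem_closedBall_zero_iff] using (hx n).trans (by linarith), rfl⟩
  obtain ⟨y, _, φ, hφ, hconv⟩ := hM.isSeqCompact hmem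
  exact ⟨φ, hφ, y, hconv⟩

lemma aux_conv {X Y : Type*} [NormedAddCommGroup X] [NormedSpace ℝ X] [CompleteSpace X]
    [NormedAddCommGroup Y] [NormedSpace ℝ Y] [CompleteSpace Y]
    (L : X →L[ℝ] Y) (hker : FiniteDimensional ℝ (LinearMap.ker (L : X →ₗ[ℝ] Y)))
    (X₁ : Submodule ℝ X) (hX₁ : IsClosed (X₁ : Set X))
    (hcompl : IsCompl (LinearMap.ker (L : X →ₗ[ℝ] Y)) X₁)
    (hrange : IsClosed ((LinearMap.range (L : X →ₗ[ℝ] Y) : Submodule ℝ Y) : Set Y))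
    (K : X →L[ℝ] Y) (hK : IsCompactOperator K)
    (x : ℕ → X) {C : ℝ} (hx : ∀ n, ‖x n‖ ≤ C)
    {w : Y} (hw : Tendsto (fun n => (L + K) (x n)) atTop (𝓝 w)) :
    ∃ (φ : ℕ → ℕ) (a : X), StrictMono φ ∧ Tendsto (fun n => x (φ n)) atTop (𝓝 a) := by
  -- bounded below on X₁
  obtain ⟨c, hc, hcb⟩ : ∃ c > 0, ∀ v ∈ X₁, c * ‖v‖ ≤ ‖L v‖ := by
    apply aux_bddBelow L X₁ hX₁
    · intro v hv hv0
      have : v ∈ LinearMap.ker (L : X →ₗ[ℝ] Y) ⊓ X₁ := ⟨hv0, hv⟩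
      rwa [hcompl.inf_eq_bot, Submodule.mem_bot] at this
    · have : ⇑L '' (X₁ : Set X) = ((LinearMap.range (L : X →ₗ[ℝ] Y) : Submodule ℝ Y) : Set Y) := by
        apply subset_antisymm
        · rintro _ ⟨v, _, rfl⟩; exact ⟨v, rfl⟩
        · rintro _ ⟨v, rfl⟩
          obtain ⟨u, v₁, hu, hv₁, rfl⟩ :=
            Submodule.codisjoint_iff_exists_add_eq.mp hcompl.codisjoint v
          exact ⟨v₁, hv₁, by simp [show L u = 0 from LinearMap.mem_ker.mp hu]⟩
      rw [this]; exact hrange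
  have hkclosed : IsClosed ((LinearMap.ker (L : X →ₗ[ℝ] Y) : Submodule ℝ X) : Set X) := ContinuousLinearMap.isClosed_ker L
  set π := (LinearMap.ker (L : X →ₗ[ℝ] Y)).linearProjOfClosedCompl X₁ hcompl hkclosed hX₁ with hπ
  set u : ℕ → X := fun n => (π (x n) : X) with hu
  set v : ℕ → X := fun n => x n - u n with hv
  have hvmem : ∀ n, v n ∈ X₁ := by
    intro n
    have h : ((LinearMap.ker (L : X →ₗ[ℝ] Y)).linearProjOfIsCompl X₁ hcompl (x n) : X) + (X₁.linearProjOfIsCompl _ hcompl.symm (x n) : X) = x n :=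
      Submodule.projection_add_projection_eq_self hcompl (x n)
    have h2 : v n = (X₁.linearProjOfIsCompl _ hcompl.symm (x n) : X) := by
      simp only [hv, hu, hπ, Submodule.coe_continuous_linearProjOfClosedCompl']
      exact sub_eq_of_eq_add' h.symm
    rw [h2]; exact Submodule.coe_mem _
  have hC0 : (0:ℝ) ≤ C := le_trans (norm_nonneg _) (hx 0)
  -- subsequence making π (x n) converge
  haveI : ProperSpace (LinearMap.ker (L : X →ₗ[ℝ] Y)) := FiniteDimensional.proper_real _
  have hubd : ∀ n, π (x n) ∈ Metric.closedBall (0 : LinearMap.ker (L : X →ₗ[ℝ] Y)) (‖π‖ * C) := by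
    intro n
    rw [mem_closedBall_zero_iff]
    calc ‖π (x n)‖ ≤ ‖π‖ * ‖x n‖ := π.le_opNorm _
      _ ≤ ‖π‖ * C := by gcongr; exact hx n
  obtain ⟨ubar, _, φ₁, hφ₁, hu₁⟩ := (isCompact_closedBall _ _).isSeqCompact hubd
  -- subsequence making K (x n) converge
  obtain ⟨φ₂, hφ₂, y, hy⟩ := aux_compact_subseq K hK (fun n => x (φ₁ n)) (fun n => hx _)
  set ψ : ℕ → ℕ := φ₁ ∘ φ₂ with hψ
  have hψm : StrictMono ψ := hφ₁.comp hφ₂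
  have huψ : Tendsto (fun n => u (ψ n)) atTop (𝓝 (ubar : X)) := by
    have := ((continuous_subtype_val.tendsto ubar).comp hu₁).comp hφ₂.tendsto_atTop
    exact this
  have hLK : Tendsto (fun n => (L + K) (x (ψ n))) atTop (𝓝 w) :=
    hw.comp (hψm.tendsto_atTop)
  have hKψ : Tendsto (fun n => K (x (ψ n))) atTop (𝓝 y) := hy
  have hLv : Tendsto (fun n => L (v (ψ n))) atTop (𝓝 (w - y - L (ubar : X))) := by
    have : (fun n => L (v (ψ n)))
        = fun n => (L + K) (x (ψ n)) - K (x (ψ n)) - L (u (ψ n)) := by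
      funext n; simp [hv, map_sub]
    rw [this]
    exact ((hLK.sub hKψ).sub ((L.continuous.tendsto _).comp huψ))
  have hvC : CauchySeq fun n => v (ψ n) := by
    rw [Metric.cauchySeq_iff]
    intro ε hε
    obtain ⟨N, hN⟩ := (Metric.cauchySeq_iff.mp hLv.cauchySeq) (c * ε) (by positivity)
    refine ⟨N, fun m hm n hn => ?_⟩
    have h1 := hN m hm n hn
    rw [dist_eq_norm] at h1 ⊢
    have h2 : c * ‖v (ψ m) - v (ψ n)‖ ≤ ‖L (v (ψ m)) - L (v (ψ n))‖ := by
      rw [← map_sub]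
      exact hcb _ (Submodule.sub_mem _ (hvmem _) (hvmem _))
    nlinarith
  obtain ⟨vbar, hvbar⟩ := cauchySeq_tendsto_of_complete hvC
  refine ⟨ψ, (ubar : X) + vbar, hψm, ?_⟩
  have : (fun n => x (ψ n)) = fun n => u (ψ n) + v (ψ n) := by
    funext n; simp [hv]
  rw [this]
  exact huψ.add hvbar
lemma aux_ker_findim {X Y : Type*} [NormedAddCommGroup X] [NormedSpace ℝ X] [CompleteSpace X]
    [NormedAddCommGroup Y] [NormedSpace ℝ Y] [CompleteSpace Y]
    (L : X →L[ℝ] Y) (hker : FiniteDimensional ℝ (LinearMap.ker (L : X →ₗ[ℝ] Y)))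
    (X₁ : Submodule ℝ X) (hX₁ : IsClosed (X₁ : Set X))
    (hcompl : IsCompl (LinearMap.ker (L : X →ₗ[ℝ] Y)) X₁)
    (hrange : IsClosed ((LinearMap.range (L : X →ₗ[ℝ] Y) : Submodule ℝ Y) : Set Y))
    (K : X →L[ℝ] Y) (hK : IsCompactOperator K) :
    FiniteDimensional ℝ (LinearMap.ker ((L + K : X →L[ℝ] Y) : X →ₗ[ℝ] Y)) := by
  set N := LinearMap.ker ((L + K : X →L[ℝ] Y) : X →ₗ[ℝ] Y) with hN
  have hNc : IsClosed ((N : Submodule ℝ X) : Set X) := ContinuousLinearMap.isClosed_ker _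
  set S : Set X := (N : Set X) ∩ Metric.closedBall 0 1 with hS
  have hSc : IsClosed S := hNc.inter Metric.isClosed_closedBall
  have hScomp : IsCompact S := by
    apply IsSeqCompact.isCompact
    intro x hx
    have hx1 : ∀ n, ‖x n‖ ≤ 1 := fun n => by
      have := (hx n).2; rwa [mem_closedBall_zero_iff] at this
    have hw : Tendsto (fun n => (L + K) (x n)) atTop (𝓝 0) := by
      have : (fun n => (L + K) (x n)) = fun _ => 0 := by
        funext n; exact LinearMap.mem_ker.mp (hx n).1
      rw [this]; exact tendsto_const_nhds
    obtain ⟨φ, a, hφ, ha⟩ := aux_conv L hker X₁ hX₁ hcompl hrange K hK x hx1 hw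
    refine ⟨a, ?_, φ, hφ, ha⟩
    exact hSc.mem_of_tendsto ha (Eventually.of_forall fun n => hx (φ n))
  have hcb : IsCompact (Metric.closedBall (0 : N) 1) := by
    rw [Topology.IsEmbedding.subtypeVal.isCompact_iff]
    have : Subtype.val '' Metric.closedBall (0 : N) 1 = S := by
      ext z
      constructor
      · rintro ⟨⟨z, hz⟩, hb, rfl⟩
        rw [mem_closedBall_zero_iff] at hb
        exact ⟨hz, by rwa [mem_closedBall_zero_iff]⟩
      · rintro ⟨hz, hb⟩
        rw [mem_closedBall_zero_iff] at hb
        exact ⟨⟨z, hz⟩, by rwa [mem_closedBall_zero_iff], rfl⟩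
    rwa [this]
  exact FiniteDimensional.of_isCompact_closedBall₀ ℝ one_pos hcb

lemma aux_range_bound {X Y : Type*} [NormedAddCommGroup X] [NormedSpace ℝ X] [CompleteSpace X]
    [NormedAddCommGroup Y] [NormedSpace ℝ Y] [CompleteSpace Y]
    (L : X →L[ℝ] Y) (hker : FiniteDimensional ℝ (LinearMap.ker (L : X →ₗ[ℝ] Y)))
    (X₁ : Submodule ℝ X) (hX₁ : IsClosed (X₁ : Set X))
    (hcompl : IsCompl (LinearMap.ker (L : X →ₗ[ℝ] Y)) X₁)
    (hrange : IsClosed ((LinearMap.range (L : X →ₗ[ℝ] Y) : Submodule ℝ Y) : Set Y))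
    (K : X →L[ℝ] Y) (hK : IsCompactOperator K) :
    ∃ C > 0, ∀ z ∈ LinearMap.range ((L + K : X →L[ℝ] Y) : X →ₗ[ℝ] Y), ∃ x, (L + K) x = z ∧ ‖x‖ ≤ C * ‖z‖ := by
  set N := LinearMap.ker ((L + K : X →L[ℝ] Y) : X →ₗ[ℝ] Y) with hN
  haveI : FiniteDimensional ℝ N := aux_ker_findim L hker X₁ hX₁ hcompl hrange K hK
  obtain ⟨f, hf⟩ := Submodule.ClosedComplemented.of_finiteDimensional N
  set π' : X →L[ℝ] X := N.subtypeL.comp f with hπ'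
  set X₁' := LinearMap.ker (π' : X →ₗ[ℝ] X) with hX₁'
  have hX₁'c : IsClosed ((X₁' : Submodule ℝ X) : Set X) := ContinuousLinearMap.isClosed_ker _
  -- bounded below on X₁'
  have hbb : ∃ c > 0, ∀ x ∈ X₁', c * ‖x‖ ≤ ‖(L + K) x‖ := by
    by_contra hcon
    push_neg at hcon
    have hseq : ∀ n : ℕ, ∃ x, x ∈ X₁' ∧ ‖x‖ = 1 ∧ ‖(L + K) x‖ < (n + 1 : ℝ)⁻¹ := by
      intro n
      obtain ⟨x, hx, hlt⟩ := hcon ((n + 1 : ℝ)⁻¹) (by positivity)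
      have hx0 : x ≠ 0 := by
        rintro rfl; simp at hlt
      refine ⟨‖x‖⁻¹ • x, X₁'.smul_mem _ hx, ?_, ?_⟩
      · rw [norm_smul, norm_inv, norm_norm, inv_mul_cancel₀ (norm_ne_zero_iff.mpr hx0)]
      · rw [map_smul, norm_smul, norm_inv, norm_norm,
          inv_mul_lt_iff₀ (norm_pos_iff.mpr hx0), mul_comm]
        exact hlt
    choose x hx1 hx2 hx3 using hseq
    have hw : Tendsto (fun n => (L + K) (x n)) atTop (𝓝 0) := by
      rw [tendsto_zero_iff_norm_tendsto_zero]
      apply squeeze_zero (fun n => norm_nonneg _) (fun n => (hx3 n).le)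
      exact tendsto_one_div_add_atTop_nhds_zero_nat.congr (by intro n; rw [one_div])
    obtain ⟨φ, a, hφ, ha⟩ := aux_conv L hker X₁ hX₁ hcompl hrange K hK x
      (fun n => (hx2 n).le) hw
    have haX₁' : a ∈ X₁' := hX₁'c.mem_of_tendsto ha (Eventually.of_forall fun n => hx1 (φ n))
    have haN : a ∈ N := by
      have h1 : Tendsto (fun n => (L + K) (x (φ n))) atTop (𝓝 ((L + K) a)) :=
        ((L + K).continuous.tendsto a).comp ha
      have h2 : Tendsto (fun n => (L + K) (x (φ n))) atTop (𝓝 0) :=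
        hw.comp hφ.tendsto_atTop
      exact LinearMap.mem_ker.mpr (tendsto_nhds_unique h1 h2)
    have hnorm : ‖a‖ = 1 := by
      have h1 : Tendsto (fun n => ‖x (φ n)‖) atTop (𝓝 ‖a‖) := ha.norm
      have h2 : Tendsto (fun n => ‖x (φ n)‖) atTop (𝓝 1) := by
        have : (fun n => ‖x (φ n)‖) = fun _ => 1 := funext fun n => hx2 (φ n)
        rw [this]; exact tendsto_const_nhds
      exact tendsto_nhds_unique h1 h2
    have : a ∈ N ⊓ X₁' := ⟨haN, haX₁'⟩
    have hfix : ∀ u : (N : Submodule ℝ X), π' (u : X) = (u : X) := fun u => by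
      simp only [hπ', ContinuousLinearMap.comp_apply, Submodule.subtypeL_apply, hf]
    have hdis : N ⊓ X₁' = ⊥ := by
      rw [eq_bot_iff]
      intro z hz
      rw [Submodule.mem_inf] at hz
      obtain ⟨hz1, hz2⟩ := hz
      have hz2' : π' z = 0 := hz2
      have : π' z = z := hfix ⟨z, hz1⟩
      rw [Submodule.mem_bot, ← this, hz2']
    rw [hdis, Submodule.mem_bot] at this
    rw [this, norm_zero] at hnorm
    exact one_ne_zero hnorm.symm
  obtain ⟨c, hc, hcb⟩ := hbb
  refine ⟨c⁻¹, by positivity, ?_⟩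
  rintro z ⟨w, rfl⟩
  set x₁ := w - π' w with hx₁
  have hfix : ∀ u : (N : Submodule ℝ X), π' (u : X) = (u : X) := fun u => by
    simp only [hπ', ContinuousLinearMap.comp_apply, Submodule.subtypeL_apply, hf]
  have hx₁mem : x₁ ∈ X₁' := by
    have h0 : π' x₁ = 0 := by
      have h2 : π' (π' w) = π' w := hfix (f w)
      rw [hx₁, map_sub, h2, sub_self]
    exact h0
  have hπ'N : π' w ∈ N := (f w).2
  have heq : (L + K) x₁ = (L + K) w := by
    rw [hx₁, map_sub, show (L + K) (π' w) = 0 from LinearMap.mem_ker.mp hπ'N, sub_zero]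
  refine ⟨x₁, heq, ?_⟩
  have := hcb x₁ hx₁mem
  rw [heq] at this
  rw [inv_mul_eq_div, le_div_iff₀ hc, mul_comm]
  exact this


/-- Let `L : X → Y` be a left-Fredholm operator between Banach spaces, with
splitting `Y = R(L) ⊕ Y₂` and corresponding continuous projection `p` onto `Y₂` along `R(L)`.
If `Z ⊆ Y` is a subspace on which `‖p z‖ ≥ κ ‖z‖` for some `κ > 0`, then for every compact
operator `K : X → Y` the subspace `Z ∩ R(L + K)` is finite-dimensional. -/
theorem stmt_3 {X Y : Type*}
    [NormedAddCommGroup X] [NormedSpace ℝ X] [CompleteSpace X]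
    [NormedAddCommGroup Y] [NormedSpace ℝ Y] [CompleteSpace Y]
    (L : X →L[ℝ] Y)
    (hker : FiniteDimensional ℝ (LinearMap.ker (L : X →ₗ[ℝ] Y)))
    (X₁ : Submodule ℝ X) (hX₁ : IsClosed (X₁ : Set X))
    (hcompl : IsCompl (LinearMap.ker (L : X →ₗ[ℝ] Y)) X₁)
    (hrange : IsClosed ((LinearMap.range (L : X →ₗ[ℝ] Y) : Submodule ℝ Y) : Set Y))
    (Y₂ : Submodule ℝ Y) (hY₂ : IsClosed (Y₂ : Set Y))
    (hYcompl : IsCompl (LinearMap.range (L : X →ₗ[ℝ] Y)) Y₂)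
    (p : Y →L[ℝ] Y)
    (hp : ∀ y : Y, p y ∈ Y₂ ∧ y - p y ∈ LinearMap.range (L : X →ₗ[ℝ] Y))
    (Z : Submodule ℝ Y) (κ : ℝ) (hκ : 0 < κ)
    (hZ : ∀ z ∈ Z, κ * ‖z‖ ≤ ‖p z‖)
    (K : X →L[ℝ] Y) (hK : IsCompactOperator K) :
    FiniteDimensional ℝ (Z ⊓ LinearMap.range ((L + K : X →L[ℝ] Y) : X →ₗ[ℝ] Y) : Submodule ℝ Y) := by
  classical
  -- p vanishes on the range of L
  have plem : ∀ y ∈ LinearMap.range (L : X →ₗ[ℝ] Y), p y = 0 := by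
    intro y hy
    obtain ⟨hp1, hp2⟩ := hp y
    have h1 : p y ∈ LinearMap.range (L : X →ₗ[ℝ] Y) := by
      have : p y = y - (y - p y) := by abel
      rw [this]
      exact Submodule.sub_mem _ hy hp2
    have : p y ∈ LinearMap.range (L : X →ₗ[ℝ] Y) ⊓ Y₂ := ⟨h1, hp1⟩
    rwa [hYcompl.inf_eq_bot, Submodule.mem_bot] at this
  obtain ⟨C, hC, hCb⟩ := aux_range_bound L hker X₁ hX₁ hcompl hrange K hK
  set W : Submodule ℝ Y := Z ⊓ LinearMap.range ((L + K : X →L[ℝ] Y) : X →ₗ[ℝ] Y) with hW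
  set B : Set Y := (W : Set Y) ∩ Metric.closedBall 0 2 with hB
  -- compactness data for p ∘ K
  have hpK : IsCompactOperator ⇑(p.comp K) := hK.continuous_comp p.continuous
  obtain ⟨M, hM, hMsub⟩ := IsCompactOperator.image_closedBall_subset_compact
    (𝕜₁ := ℝ) (f := ((p.comp K : X →L[ℝ] Y) : X →ₗ[ℝ] Y)) hpK (2 * C)
  -- p maps the 2-ball of W into M
  have hkey : ∀ z ∈ B, p z ∈ M := by
    intro z hz
    obtain ⟨⟨hzZ, hzR⟩, hzb⟩ := hz
    rw [Metric.mem_closedBall, dist_zero_right] at hzb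
    obtain ⟨x, hx1, hx2⟩ := hCb z hzR
    have hxb : x ∈ Metric.closedBall (0 : X) (2 * C) := by
      rw [Metric.mem_closedBall, dist_zero_right]
      calc ‖x‖ ≤ C * ‖z‖ := hx2
        _ ≤ C * 2 := by gcongr
        _ = 2 * C := by ring
    have hpz : p z = p.comp K x := by
      have hzeq : z = L x + K x := by rw [← hx1]; rfl
      rw [hzeq, map_add, plem (L x) ⟨x, rfl⟩, zero_add]
      rfl
    rw [hpz]
    exact hMsub ⟨x, hxb, rfl⟩
  -- B is totally bounded
  have hBtb : TotallyBounded B := by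
    rw [Metric.totallyBounded_iff]
    intro ε hε
    obtain ⟨t, htf, htsub⟩ := (Metric.totallyBounded_iff.mp hM.totallyBounded)
      (κ * ε / 2) (by positivity)
    set b : Y → Y := fun y =>
      if h : ∃ z ∈ B, p z ∈ Metric.ball y (κ * ε / 2) then h.choose else 0 with hb
    refine ⟨b '' t, htf.image b, ?_⟩
    intro z hz
    obtain ⟨y, hy, hpy⟩ := Set.mem_iUnion₂.mp (htsub (hkey z hz))
    have hex : ∃ z' ∈ B, p z' ∈ Metric.ball y (κ * ε / 2) := ⟨z, hz, hpy⟩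
    have hbmem : b y ∈ B ∧ p (b y) ∈ Metric.ball y (κ * ε / 2) := by
      rw [hb]; simp only [dif_pos hex]
      exact ⟨hex.choose_spec.1, hex.choose_spec.2⟩
    rw [Set.mem_iUnion₂]
    refine ⟨b y, Set.mem_image_of_mem b hy, ?_⟩
    rw [Metric.mem_ball, dist_eq_norm]
    have hzZ : z ∈ Z := hz.1.1
    have hbZ : b y ∈ Z := hbmem.1.1.1
    have h1 : κ * ‖z - b y‖ ≤ ‖p (z - b y)‖ := hZ _ (Z.sub_mem hzZ hbZ)
    have h2 : ‖p (z - b y)‖ = ‖p z - p (b y)‖ := by rw [map_sub]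
    have h3 : ‖p z - p (b y)‖ < κ * ε := by
      calc ‖p z - p (b y)‖ ≤ dist (p z) y + dist y (p (b y)) := by
            rw [← dist_eq_norm]; exact dist_triangle _ _ _
        _ < κ * ε / 2 + κ * ε / 2 := by
            have hb2 := hbmem.2
            rw [Metric.mem_ball] at hpy hb2
            exact add_lt_add hpy (by rw [dist_comm]; exact hb2)
        _ = κ * ε := by ring
    have := h1.trans_lt (h2 ▸ h3)
    exact lt_of_mul_lt_mul_left this hκ.le
  -- pass to the closure of W
  set Wc := W.topologicalClosure with hWc
  have hWcc : IsClosed ((Wc : Submodule ℝ Y) : Set Y) := W.isClosed_topologicalClosure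
  have hScomp : IsCompact ((Wc : Set Y) ∩ Metric.closedBall 0 1) := by
    have hclB : IsCompact (closure B) :=
      TotallyBounded.isCompact_of_isClosed hBtb.closure isClosed_closure
    apply hclB.of_isClosed_subset (hWcc.inter Metric.isClosed_closedBall)
    intro z hz
    obtain ⟨hz1, hz2⟩ := hz
    rw [Metric.mem_closedBall, dist_zero_right] at hz2
    rw [Metric.mem_closure_iff]
    intro ε hε
    have hz1' : z ∈ closure (W : Set Y) := by
      rwa [hWc, Submodule.topologicalClosure_coe] at hz1
    obtain ⟨w, hwW, hwd⟩ := Metric.mem_closure_iff.mp hz1' (min ε 1) (by positivity)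
    refine ⟨w, ⟨hwW, ?_⟩, hwd.trans_le (min_le_left _ _)⟩
    rw [Metric.mem_closedBall, dist_zero_right]
    have : ‖w‖ ≤ ‖z‖ + dist z w := by
      rw [dist_eq_norm]
      calc ‖w‖ = ‖z + (w - z)‖ := congrArg norm (by abel)
        _ ≤ ‖z‖ + ‖w - z‖ := norm_add_le _ _
        _ = ‖z‖ + ‖z - w‖ := by rw [norm_sub_rev]
    have h4 : dist z w < 1 := hwd.trans_le (min_le_right _ _)
    linarith
  have hballW : IsCompact (Metric.closedBall (0 : Wc) 1) := by
    rw [Topology.IsEmbedding.subtypeVal.isCompact_iff]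
    have : Subtype.val '' Metric.closedBall (0 : Wc) 1
        = (Wc : Set Y) ∩ Metric.closedBall 0 1 := by
      ext z
      constructor
      · rintro ⟨⟨z, hzW⟩, hzb, rfl⟩
        rw [Metric.mem_closedBall, dist_zero_right] at hzb
        exact ⟨hzW, by rwa [Metric.mem_closedBall, dist_zero_right]⟩
      · rintro ⟨hzW, hzb⟩
        rw [Metric.mem_closedBall, dist_zero_right] at hzb
        exact ⟨⟨z, hzW⟩, by rwa [Metric.mem_closedBall, dist_zero_right], rfl⟩
    rwa [this]
  haveI : FiniteDimensional ℝ Wc := FiniteDimensional.of_isCompact_closedBall₀ ℝ one_pos hballW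
  exact Submodule.finiteDimensional_of_le (W.le_topologicalClosure)
end

section
/- Let X and Y be Banach spaces, L : X → Y a left-Fredholm operator, and K : X → Y a compact operator. Then L + K is a left-Fredholm operator with the same index as L (where the index is dim Ker minus the dimension of a complement of the range, possibly −∞). -/
open Module

/-- A bounded operator is left-Fredholm if its kernel is finite-dimensional and splits
(admits a closed complement) and its range is closed and splits. -/
def LeftFredholm {X Y : Type*} [NormedAddCommGroup X] [NormedSpace ℝ X]
    [NormedAddCommGroup Y] [NormedSpace ℝ Y] (L : X →L[ℝ] Y) : Prop :=
  FiniteDimensional ℝ (LinearMap.ker (L : X →ₗ[ℝ] Y)) ∧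
  (∃ X₁ : Submodule ℝ X, IsClosed (X₁ : Set X) ∧ IsCompl (LinearMap.ker (L : X →ₗ[ℝ] Y)) X₁) ∧
  IsClosed ((LinearMap.range (L : X →ₗ[ℝ] Y) : Submodule ℝ Y) : Set Y) ∧
  (∃ Y₂ : Submodule ℝ Y, IsClosed (Y₂ : Set Y) ∧ IsCompl (LinearMap.range (L : X →ₗ[ℝ] Y)) Y₂)

open Classical in
/-- The Fredholm index: `dim Ker L − dim coker L`, equal to `⊥ = −∞` when the cokernel is
infinite-dimensional (i.e. when `L` is not Fredholm). -/
noncomputable def fredholmIndex {X Y : Type*} [NormedAddCommGroup X] [NormedSpace ℝ X]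
    [NormedAddCommGroup Y] [NormedSpace ℝ Y] (L : X →L[ℝ] Y) : WithBot ℤ :=
  if FiniteDimensional ℝ (Y ⧸ LinearMap.range (L : X →ₗ[ℝ] Y)) then
    (((finrank ℝ (LinearMap.ker (L : X →ₗ[ℝ] Y)) : ℤ) - (finrank ℝ (Y ⧸ LinearMap.range (L : X →ₗ[ℝ] Y)) : ℤ) : ℤ) :
      WithBot ℤ)
  else ⊥

open Module Metric Filter Topology

section Chunk1

variable {X Y : Type*} [NormedAddCommGroup X] [NormedSpace ℝ X]
  [NormedAddCommGroup Y] [NormedSpace ℝ Y]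

/-- From a compact operator, bounded sequences have images with convergent subsequences. -/
theorem IsCompactOperator.exists_subseq {K : X →L[ℝ] Y} (hK : IsCompactOperator K)
    (x : ℕ → X) (C : ℝ) (hx : ∀ n, ‖x n‖ ≤ C) :
    ∃ φ : ℕ → ℕ, StrictMono φ ∧ ∃ y, Tendsto (fun n => K (x (φ n))) atTop (𝓝 y) := by
  obtain ⟨Kc, hKc, hsub⟩ :=
    IsCompactOperator.image_closedBall_subset_compact (f := (K : X →ₗ[ℝ] Y)) hK (max C 0 + 1)
  have hmem : ∀ n, K (x n) ∈ Kc := fun n => hsub ⟨x n, by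
      simp only [mem_closedBall, dist_zero_right]
      exact (hx n).trans (by linarith [le_max_left C (0:ℝ)]), rfl⟩
  obtain ⟨y, -, φ, hφ, hy⟩ := hKc.tendsto_subseq hmem
  exact ⟨φ, hφ, y, hy⟩

/-- "Semiproper": bounded sequences whose images converge have convergent subsequences. -/
def SP (T : X →L[ℝ] Y) : Prop :=
  ∀ (x : ℕ → X) (C : ℝ), (∀ n, ‖x n‖ ≤ C) → ∀ y : Y,
    Tendsto (fun n => T (x n)) atTop (𝓝 y) →
    ∃ φ : ℕ → ℕ, StrictMono φ ∧ ∃ a : X, Tendsto (fun n => x (φ n)) atTop (𝓝 a)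

theorem sp_of_left_parametrix (T : X →L[ℝ] Y) (S : Y →L[ℝ] X) (C : X →L[ℝ] X)
    (hC : IsCompactOperator C) (h : S.comp T = ContinuousLinearMap.id ℝ X - C) : SP T := by
  intro x B hx y hy
  obtain ⟨φ, hφ, z, hz⟩ := hC.exists_subseq x B hx
  refine ⟨φ, hφ, S y + z, ?_⟩
  have h1 : Tendsto (fun n => S (T (x (φ n)))) atTop (𝓝 (S y)) :=
    (S.continuous.tendsto y).comp (hy.comp hφ.tendsto_atTop)
  have h2 : ∀ v : X, v = S (T v) + C v := by
    intro v
    have := congrArg (fun f : X →L[ℝ] X => f v) h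
    simp only [ContinuousLinearMap.comp_apply, ContinuousLinearMap.sub_apply,
      ContinuousLinearMap.id_apply] at this
    rw [this]; abel
  have := h1.add hz
  refine this.congr fun n => (h2 (x (φ n))).symm

theorem SP.finiteDimensional_ker [CompleteSpace X] {T : X →L[ℝ] Y} (h : SP T) :
    FiniteDimensional ℝ (LinearMap.ker T.toLinearMap) := by
  apply FiniteDimensional.of_isCompact_closedBall₀ (𝕜 := ℝ) (r := 1) one_pos
  apply IsSeqCompact.isCompact
  intro u hu
  have hbd : ∀ n, ‖(u n : X)‖ ≤ 1 := fun n => by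
    have := hu n; simpa [dist_zero_right] using this
  have hT : Tendsto (fun n => T ((u n : X))) atTop (𝓝 0) := by
    have : ∀ n, T ((u n : X)) = 0 := fun n => (u n).2
    simpa [this] using tendsto_const_nhds
  obtain ⟨φ, hφ, a, ha⟩ := h (fun n => (u n : X)) 1 hbd 0 hT
  have haker : a ∈ LinearMap.ker T.toLinearMap :=
    (ContinuousLinearMap.isClosed_ker T).mem_of_tendsto ha
      (Eventually.of_forall fun n => (u (φ n)).2)
  have hanorm : ‖a‖ ≤ 1 := by
    have := ha.norm
    exact le_of_tendsto this (Eventually.of_forall fun n => hbd (φ n))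
  refine ⟨⟨a, haker⟩, ?_, φ, hφ, ?_⟩
  · simpa [dist_zero_right] using hanorm
  · rw [tendsto_subtype_rng]
    exact ha

end Chunk1

section Chunk2

variable {X Y : Type*} [NormedAddCommGroup X] [NormedSpace ℝ X]
  [NormedAddCommGroup Y] [NormedSpace ℝ Y]

theorem SP.isClosed_range [CompleteSpace X] {T : X →L[ℝ] Y} (h : SP T) :
    IsClosed (LinearMap.range T.toLinearMap : Set Y) := by
  apply IsSeqClosed.isClosed
  intro yn y hmem hlim
  choose x hx using hmem
  set N : Submodule ℝ X := LinearMap.ker T.toLinearMap with hN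
  have hNne : ((N : Set X)).Nonempty := ⟨0, N.zero_mem⟩
  have hsel : ∀ n : ℕ, ∃ k ∈ (N : Set X), dist (x n) k < infDist (x n) N + 1 / (n + 1) := by
    intro n
    rw [← Metric.infDist_lt_iff hNne]
    have : (0:ℝ) < 1 / (n + 1) := by positivity
    linarith
  choose k hkN hk using hsel
  set w : ℕ → X := fun n => x n - k n with hw
  have hTw : ∀ n, T (w n) = yn n := by
    intro n
    have : T (k n) = 0 := hkN n
    simp [hw, map_sub, this]; simpa using hx n
  have hwlow : ∀ n, ‖w n‖ < infDist (x n) N + 1 / (n + 1) := by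
    intro n
    have := hk n
    rwa [dist_eq_norm] at this
  by_cases hb : ∃ M : ℝ, ∃ᶠ n in Filter.atTop, ‖w n‖ ≤ M
  · obtain ⟨M, hM⟩ := hb
    obtain ⟨φ, hφ, hφM⟩ := Filter.extraction_of_frequently_atTop hM
    have hTconv : Filter.Tendsto (fun n => T (w (φ n))) Filter.atTop (𝓝 y) := by
      have : Filter.Tendsto (fun n => yn (φ n)) Filter.atTop (𝓝 y) :=
        hlim.comp hφ.tendsto_atTop
      exact this.congr fun n => (hTw (φ n)).symm
    obtain ⟨ψ, hψ, a, ha⟩ := h (fun n => w (φ n)) M hφM y hTconv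
    have : T a = y := by
      have h1 : Filter.Tendsto (fun n => T (w (φ (ψ n)))) Filter.atTop (𝓝 (T a)) :=
        (T.continuous.tendsto a).comp ha
      have h2 : Filter.Tendsto (fun n => T (w (φ (ψ n)))) Filter.atTop (𝓝 y) :=
        hTconv.comp hψ.tendsto_atTop
      exact tendsto_nhds_unique h1 h2
    exact ⟨a, this⟩
  · exfalso
    push_neg at hb
    have hwinf : Filter.Tendsto (fun n => ‖w n‖) Filter.atTop Filter.atTop := by
      rw [Filter.tendsto_atTop]
      intro M
      exact (hb M).mono fun n hn => hn.le
    set u : ℕ → X := fun n => ‖w n‖⁻¹ • w n with hu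
    have hubd : ∀ n, ‖u n‖ ≤ 1 := by
      intro n
      rcases eq_or_ne (w n) 0 with h0 | h0
      · simp [hu, h0]
      · rw [hu]; simp only [norm_smul, norm_inv, norm_norm]
        rw [inv_mul_cancel₀ (norm_ne_zero_iff.2 h0)]
    have hTu : Filter.Tendsto (fun n => T (u n)) Filter.atTop (𝓝 0) := by
      have h1 : Filter.Tendsto (fun n => ‖w n‖⁻¹) Filter.atTop (𝓝 0) :=
        tendsto_inv_atTop_zero.comp hwinf
      have h2 : Filter.Tendsto (fun n => ‖w n‖⁻¹ • yn n) Filter.atTop (𝓝 ((0:ℝ) • y)) :=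
        h1.smul hlim
      rw [zero_smul] at h2
      refine h2.congr fun n => ?_
      simp [hu, map_smul, hTw n]
    obtain ⟨φ, hφ, a, ha⟩ := h u 1 hubd 0 hTu
    have haN : a ∈ N := by
      have h1 : Filter.Tendsto (fun n => T (u (φ n))) Filter.atTop (𝓝 (T a)) :=
        (T.continuous.tendsto a).comp ha
      have h2 : Filter.Tendsto (fun n => T (u (φ n))) Filter.atTop (𝓝 0) :=
        hTu.comp hφ.tendsto_atTop
      exact LinearMap.mem_ker.2 (tendsto_nhds_unique h1 h2)
    -- eventually ‖u n - a‖ ≥ 1/2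
    have hev : ∀ n : ℕ, 1 ≤ n → 1 ≤ ‖w n‖ → 1/2 ≤ ‖u n - a‖ := by
      intro n hn hwn
      have hwne : ‖w n‖ ≠ 0 := by linarith
      have hmemN : k n + ‖w n‖ • a ∈ N := N.add_mem (hkN n) (N.smul_mem _ haN)
      have h1 : infDist (x n) N ≤ ‖w n - ‖w n‖ • a‖ := by
        have := Metric.infDist_le_dist_of_mem (x := x n) hmemN
        rw [dist_eq_norm] at this
        calc infDist (x n) N ≤ ‖x n - (k n + ‖w n‖ • a)‖ := this
          _ = ‖w n - ‖w n‖ • a‖ := by rw [hw]; beta_reduce; congr 1; abel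
      have h2 : ‖w n‖ - 1/(n+1) ≤ ‖w n - ‖w n‖ • a‖ := by
        have := hwlow n; linarith
      have h3 : u n - a = ‖w n‖⁻¹ • (w n - ‖w n‖ • a) := by
        rw [hu]
        rw [smul_sub, smul_smul, inv_mul_cancel₀ hwne, one_smul]
      rw [h3, norm_smul, norm_inv, norm_norm]
      have hn' : (1:ℝ) ≤ (n:ℝ) := by exact_mod_cast hn
      have h4 : (1:ℝ)/(n+1) ≤ 1/2 := by
        rw [div_le_div_iff₀ (by positivity) (by norm_num)]
        linarith
      have h5 : ‖w n‖⁻¹ * (‖w n‖ - 1/(n+1)) ≤ ‖w n‖⁻¹ * ‖w n - ‖w n‖ • a‖ := by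
        apply mul_le_mul_of_nonneg_left h2 (by positivity)
      have h6 : ‖w n‖⁻¹ * (‖w n‖ - 1/(n+1)) = 1 - ‖w n‖⁻¹ * (1/(n+1)) := by
        field_simp
      have h7 : ‖w n‖⁻¹ ≤ 1 := by
        rw [inv_le_one_iff₀]; right; exact hwn
      have h8 : ‖w n‖⁻¹ * (1/(n+1)) ≤ 1 * (1/2) := by
        apply mul_le_mul h7 h4 (by positivity) (by norm_num)
      calc (1:ℝ)/2 = 1 - 1 * (1/2) := by norm_num
        _ ≤ 1 - ‖w n‖⁻¹ * (1/(n+1)) := by linarith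
        _ = ‖w n‖⁻¹ * (‖w n‖ - 1/(n+1)) := h6.symm
        _ ≤ _ := h5
    -- but u ∘ φ → a, contradiction
    have hdist : Filter.Tendsto (fun n => ‖u (φ n) - a‖) Filter.atTop (𝓝 0) := by
      have := ha.sub_const a
      simpa using this.norm
    have hev2 : ∀ᶠ n in Filter.atTop, 1 ≤ ‖w (φ n)‖ := by
      have : ∀ᶠ m in Filter.atTop, 1 ≤ ‖w m‖ := (hb 1).mono fun n hn => hn.le
      exact hφ.tendsto_atTop.eventually this
    have hev3 : ∀ᶠ n in Filter.atTop, ‖u (φ n) - a‖ < 1/2 := by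
      exact Filter.Tendsto.eventually_lt_const (show (0:ℝ) < 1/2 by norm_num) hdist
    have : ∀ᶠ (_ : ℕ) in Filter.atTop, False := by
      filter_upwards [hev2, hev3, Filter.eventually_ge_atTop 1] with n h1 h2 h3
      have hφn : 1 ≤ φ n := le_trans h3 (hφ.le_apply)
      exact absurd (hev (φ n) hφn h1) (by linarith)
    exact this.exists.elim fun _ hf => hf

end Chunk2

section Chunk3

variable {X Y : Type*} [NormedAddCommGroup X] [NormedSpace ℝ X]
  [NormedAddCommGroup Y] [NormedSpace ℝ Y]

theorem fd_quot_iff_compl {p q : Submodule ℝ Y} (h : IsCompl p q) :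
    FiniteDimensional ℝ (Y ⧸ p) ↔ FiniteDimensional ℝ q :=
  ⟨fun hh => (p.quotientEquivOfIsCompl q h).finiteDimensional,
   fun hh => (p.quotientEquivOfIsCompl q h).symm.finiteDimensional⟩

theorem finrank_quot_eq_compl {p q : Submodule ℝ Y} (h : IsCompl p q) :
    finrank ℝ (Y ⧸ p) = finrank ℝ q :=
  (p.quotientEquivOfIsCompl q h).finrank_eq

theorem isCompactOperator_of_finiteDimensional_range (f : X →L[ℝ] Y)
    (h : FiniteDimensional ℝ (LinearMap.range f.toLinearMap)) : IsCompactOperator ⇑f := by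
  have hr : (0:ℝ) < 1 := one_pos
  have key : IsCompactOperator ⇑(f : X →ₗ[ℝ] Y) := by
    rw [isCompactOperator_iff_isCompact_closure_image_closedBall (f := (f : X →ₗ[ℝ] Y)) hr]
    set g : X →L[ℝ] LinearMap.range f.toLinearMap :=
      f.codRestrict _ (fun x => LinearMap.mem_range_self _ x) with hg
    have himg : ∀ x ∈ Metric.closedBall (0:X) 1,
        g x ∈ Metric.closedBall (0 : LinearMap.range f.toLinearMap) ‖g‖ := by
      intro x hx
      rw [Metric.mem_closedBall, dist_zero_right]
      calc ‖g x‖ ≤ ‖g‖ * ‖x‖ := g.le_opNorm x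
        _ ≤ ‖g‖ * 1 := by
            apply mul_le_mul_of_nonneg_left _ (norm_nonneg g)
            simpa [Metric.mem_closedBall, dist_zero_right] using hx
        _ = ‖g‖ := mul_one _
    have hbdd : Bornology.IsBounded (g '' Metric.closedBall 0 1) :=
      (Metric.isBounded_closedBall (x := (0 : LinearMap.range f.toLinearMap)) (r := ‖g‖)).subset
        (by rintro - ⟨x, hx, rfl⟩; exact himg x hx)
    have hcpt : IsCompact (closure (g '' Metric.closedBall 0 1)) :=
      Metric.isCompact_of_isClosed_isBounded isClosed_closure hbdd.closure
    have hcpt2 : IsCompact ((Subtype.val : LinearMap.range f.toLinearMap → Y) ''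
        closure (g '' Metric.closedBall 0 1)) := hcpt.image continuous_subtype_val
    apply hcpt2.of_isClosed_subset isClosed_closure
    apply closure_minimal _ hcpt2.isClosed
    rintro - ⟨x, hx, rfl⟩
    exact ⟨g x, subset_closure ⟨x, hx, rfl⟩, rfl⟩
  exact key

variable [CompleteSpace X] [CompleteSpace Y]

theorem exists_restrEquiv (A : X →L[ℝ] Y) (X₁ : Submodule ℝ X)
    (hX₁c : IsClosed (X₁ : Set X)) (hc : IsCompl (LinearMap.ker A.toLinearMap) X₁)
    (hrc : IsClosed ((LinearMap.range A.toLinearMap : Submodule ℝ Y) : Set Y)) :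
    ∃ e : X₁ ≃L[ℝ] LinearMap.range A.toLinearMap, ∀ x : X₁, (e x : Y) = A x := by
  haveI := hX₁c.completeSpace_coe
  haveI := hrc.completeSpace_coe
  set f : X₁ →L[ℝ] LinearMap.range A.toLinearMap :=
    (A.comp X₁.subtypeL).codRestrict _ (fun x => LinearMap.mem_range_self _ _) with hf
  have hinj : LinearMap.ker f.toLinearMap = ⊥ := by
    rw [Submodule.eq_bot_iff]
    rintro ⟨x, hx⟩ hker
    have hx0 : A x = 0 := by
      have := congrArg (Subtype.val) (LinearMap.mem_ker.1 hker)
      exact this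
    have : x ∈ LinearMap.ker A.toLinearMap ⊓ X₁ := ⟨LinearMap.mem_ker.2 hx0, hx⟩
    rw [hc.inf_eq_bot] at this
    simpa using this
  have hsurj : LinearMap.range f.toLinearMap = ⊤ := by
    rw [Submodule.eq_top_iff']
    rintro ⟨y, hy⟩
    obtain ⟨x, rfl⟩ := hy
    have hx : x ∈ LinearMap.ker A.toLinearMap ⊔ X₁ := by rw [hc.sup_eq_top]; trivial
    obtain ⟨k, hk, x₁, hx₁, rfl⟩ := Submodule.mem_sup.1 hx
    refine ⟨⟨x₁, hx₁⟩, ?_⟩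
    apply Subtype.ext
    simp only [hf, ContinuousLinearMap.coe_codRestrict_apply, ContinuousLinearMap.comp_apply,
      Submodule.subtypeL_apply, Submodule.coe_subtype]
    rw [map_add, LinearMap.mem_ker.1 hk, zero_add]
    rfl
  exact ⟨ContinuousLinearEquiv.ofBijective f hinj hsurj, fun x => rfl⟩

theorem exists_parametrix (A : X →L[ℝ] Y) {X₁ : Submodule ℝ X} {Y₂ : Submodule ℝ Y}
    (hX₁c : IsClosed (X₁ : Set X)) (hc : IsCompl (LinearMap.ker A.toLinearMap) X₁)
    (hrc : IsClosed ((LinearMap.range A.toLinearMap : Submodule ℝ Y) : Set Y))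
    (hY₂c : IsClosed (Y₂ : Set Y)) (hc₂ : IsCompl (LinearMap.range A.toLinearMap) Y₂) :
    ∃ (S : Y →L[ℝ] X) (P : X →L[ℝ] X) (Q : Y →L[ℝ] Y),
      S.comp A = ContinuousLinearMap.id ℝ X - P ∧
      A.comp S = ContinuousLinearMap.id ℝ Y - Q ∧
      (∀ x, P x ∈ LinearMap.ker A.toLinearMap) ∧ (∀ y, Q y ∈ Y₂) ∧
      LinearMap.ker S.toLinearMap = Y₂ ∧ LinearMap.range S.toLinearMap = X₁ := by
  have hkerc : IsClosed ((LinearMap.ker A.toLinearMap : Submodule ℝ X) : Set X) := ContinuousLinearMap.isClosed_ker A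
  obtain ⟨e, he⟩ := exists_restrEquiv A X₁ hX₁c hc hrc
  set PR : Y →L[ℝ] LinearMap.range A.toLinearMap :=
    (LinearMap.range A.toLinearMap).linearProjOfClosedCompl Y₂ hc₂ hrc hY₂c with hPR
  set PK : X →L[ℝ] LinearMap.ker A.toLinearMap :=
    (LinearMap.ker A.toLinearMap).linearProjOfClosedCompl X₁ hc hkerc hX₁c with hPK
  set S : Y →L[ℝ] X := X₁.subtypeL.comp ((e.symm : (LinearMap.range A.toLinearMap) →L[ℝ] X₁).comp PR) with hS
  set P : X →L[ℝ] X := (LinearMap.ker A.toLinearMap).subtypeL.comp PK with hP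
  set Q : Y →L[ℝ] Y := ContinuousLinearMap.id ℝ Y - (LinearMap.range A.toLinearMap).subtypeL.comp PR with hQ
  have hPR_left : ∀ (y : Y) (hy : y ∈ LinearMap.range A.toLinearMap), PR y = ⟨y, hy⟩ := by
    intro y hy
    have : PR ((⟨y, hy⟩ : LinearMap.range A.toLinearMap) : Y) = ⟨y, hy⟩ := by
      show ((LinearMap.range A.toLinearMap).linearProjOfClosedCompl Y₂ hc₂ hrc hY₂c) _ = _
      rw [Submodule.coe_continuous_linearProjOfClosedCompl']
      exact Submodule.linearProjOfIsCompl_apply_left hc₂ ⟨y, hy⟩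
    simpa using this
  have hPR_right : ∀ y ∈ Y₂, PR y = 0 := by
    intro y hy
    show ((LinearMap.range A.toLinearMap).linearProjOfClosedCompl Y₂ hc₂ hrc hY₂c) _ = _
    rw [Submodule.coe_continuous_linearProjOfClosedCompl']
    exact Submodule.linearProjOfIsCompl_apply_right' hc₂ hy
  have hPK_left : ∀ (x : X) (hx : x ∈ LinearMap.ker A.toLinearMap), PK x = ⟨x, hx⟩ := by
    intro x hx
    show ((LinearMap.ker A.toLinearMap).linearProjOfClosedCompl X₁ hc hkerc hX₁c) _ = _
    rw [Submodule.coe_continuous_linearProjOfClosedCompl']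
    exact Submodule.linearProjOfIsCompl_apply_left hc ⟨x, hx⟩
  have hPK_right : ∀ x ∈ X₁, PK x = 0 := by
    intro x hx
    show ((LinearMap.ker A.toLinearMap).linearProjOfClosedCompl X₁ hc hkerc hX₁c) _ = _
    rw [Submodule.coe_continuous_linearProjOfClosedCompl']
    exact Submodule.linearProjOfIsCompl_apply_right' hc hx
  -- symm characterization
  have hesymm : ∀ (z : LinearMap.range A.toLinearMap) (x : X₁), A x = (z : Y) → e.symm z = x := by
    intro z x hx
    rw [ContinuousLinearEquiv.symm_apply_eq]
    apply Subtype.ext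
    rw [he x, hx]
  have key1 : ∀ x : X, S (A x) = x - P x := by
    intro x
    have hx : x ∈ LinearMap.ker A.toLinearMap ⊔ X₁ := by rw [hc.sup_eq_top]; trivial
    obtain ⟨k, hk, x₁, hx₁, rfl⟩ := Submodule.mem_sup.1 hx
    have hPx : P (k + x₁) = k := by
      rw [hP]
      simp only [ContinuousLinearMap.comp_apply, Submodule.subtypeL_apply]
      rw [map_add, hPK_left k hk, hPK_right x₁ hx₁, add_zero]
    have hAx : A (k + x₁) = A x₁ := by
      rw [map_add, show A k = 0 from LinearMap.mem_ker.1 hk, zero_add]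
    have hmem : A x₁ ∈ LinearMap.range A.toLinearMap := LinearMap.mem_range_self _ _
    rw [hPx, hAx, hS]
    simp only [ContinuousLinearMap.comp_apply, Submodule.subtypeL_apply,
      ContinuousLinearEquiv.coe_coe]
    rw [hPR_left _ hmem, hesymm ⟨A x₁, hmem⟩ ⟨x₁, hx₁⟩ rfl]
    simp [add_sub_cancel_right]
  have key2 : ∀ y : Y, A (S y) = y - Q y := by
    intro y
    have : y - Q y = ((PR y : Y)) := by rw [hQ]; simp
    rw [this, hS]
    simp only [ContinuousLinearMap.comp_apply, Submodule.subtypeL_apply,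
      ContinuousLinearEquiv.coe_coe]
    rw [← he (e.symm (PR y)), ContinuousLinearEquiv.apply_symm_apply]
  refine ⟨S, P, Q, ?_, ?_, ?_, ?_, ?_, ?_⟩
  · ext x
    simp only [ContinuousLinearMap.comp_apply, ContinuousLinearMap.sub_apply,
      ContinuousLinearMap.id_apply]
    exact key1 x
  · ext y
    simp only [ContinuousLinearMap.comp_apply, ContinuousLinearMap.sub_apply,
      ContinuousLinearMap.id_apply]
    exact key2 y
  · intro x
    rw [hP]
    simp only [ContinuousLinearMap.comp_apply, Submodule.subtypeL_apply]
    exact (PK x).2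
  · intro y
    have hy : y ∈ LinearMap.range A.toLinearMap ⊔ Y₂ := by rw [hc₂.sup_eq_top]; trivial
    obtain ⟨r, hr, q, hq, rfl⟩ := Submodule.mem_sup.1 hy
    have : Q (r + q) = q := by
      rw [hQ]
      simp only [ContinuousLinearMap.sub_apply, ContinuousLinearMap.id_apply,
        ContinuousLinearMap.comp_apply, Submodule.subtypeL_apply]
      rw [map_add, hPR_left r hr, hPR_right q hq, add_zero]
      abel
    rw [this]; exact hq
  · ext y
    constructor
    · intro hy
      have hy' : S y = 0 := hy
      have hy2 : y ∈ LinearMap.range A.toLinearMap ⊔ Y₂ := by rw [hc₂.sup_eq_top]; trivial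
      obtain ⟨r, hr, q, hq, rfl⟩ := Submodule.mem_sup.1 hy2
      rw [hS] at hy'
      simp only [ContinuousLinearMap.comp_apply, Submodule.subtypeL_apply,
        ContinuousLinearEquiv.coe_coe] at hy'
      have h1 : e.symm (PR (r + q)) = 0 := by
        apply Subtype.ext; simpa using hy'
      have h2 : PR (r + q) = 0 := by
        have := congrArg e h1
        rwa [ContinuousLinearEquiv.apply_symm_apply, map_zero] at this
      rw [map_add, hPR_left r hr, hPR_right q hq, add_zero] at h2
      have : r = 0 := by simpa using congrArg Subtype.val h2
      rw [this, zero_add]; exact hq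
    · intro hy
      show S y = 0
      rw [hS]
      simp only [ContinuousLinearMap.comp_apply, Submodule.subtypeL_apply,
        ContinuousLinearEquiv.coe_coe]
      rw [hPR_right y hy, map_zero]
      rfl
  · apply le_antisymm
    · rintro - ⟨y, rfl⟩
      rw [hS]
      simp only [ContinuousLinearMap.coe_coe, ContinuousLinearMap.comp_apply, Submodule.subtypeL_apply,
        ContinuousLinearEquiv.coe_coe]
      exact (e.symm (PR y)).2
    · intro x₁ hx₁
      refine ⟨A x₁, ?_⟩
      have := key1 x₁
      rw [ContinuousLinearMap.coe_coe, this]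
      have : P x₁ = 0 := by
        rw [hP]
        simp only [ContinuousLinearMap.comp_apply, Submodule.subtypeL_apply]
        rw [hPK_right x₁ hx₁]; rfl
      rw [this, sub_zero]

end Chunk3

section Chunk4

open Filter

variable {X : Type*} [NormedAddCommGroup X] [NormedSpace ℝ X]

/-- Riesz-type selection: a unit vector in `G` at distance `≥ 1/2` from a closed `F < G`. -/
theorem exists_norm_one_half {F G : Submodule ℝ X} (hFc : IsClosed (F : Set X)) (hFG : F ≤ G)
    {x : X} (hxG : x ∈ G) (hxF : x ∉ F) :
    ∃ u : X, u ∈ G ∧ ‖u‖ = 1 ∧ ∀ y ∈ F, 1/2 ≤ ‖u - y‖ := by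
  have hFne : (F : Set X).Nonempty := ⟨0, F.zero_mem⟩
  set d := Metric.infDist x (F : Set X) with hd
  have hd0 : 0 < d := by
    rcases lt_or_eq_of_le (Metric.infDist_nonneg (x := x) (s := (F : Set X))) with h | h
    · exact h
    · exfalso; exact hxF ((hFc.mem_iff_infDist_zero hFne).2 h.symm)
  obtain ⟨y₀, hy₀F, hy₀⟩ := (Metric.infDist_lt_iff hFne).1 (show d < 2 * d by linarith)
  set z := x - y₀ with hz
  have hznorm : ‖z‖ < 2 * d := by rwa [hz, ← dist_eq_norm]
  have hzlow : d ≤ ‖z‖ := by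
    rw [hz, ← dist_eq_norm]
    exact Metric.infDist_le_dist_of_mem hy₀F
  have hzpos : 0 < ‖z‖ := lt_of_lt_of_le hd0 hzlow
  refine ⟨‖z‖⁻¹ • z, ?_, ?_, ?_⟩
  · exact G.smul_mem _ (G.sub_mem hxG (hFG hy₀F))
  · rw [norm_smul, norm_inv, norm_norm, inv_mul_cancel₀ (ne_of_gt hzpos)]
  · intro y hy
    have h1 : ∀ w : X, ‖z‖⁻¹ • w - y = ‖z‖⁻¹ • (w - ‖z‖ • y) := by
      intro w
      rw [smul_sub, smul_smul, inv_mul_cancel₀ (ne_of_gt hzpos), one_smul]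
    have h2 : d ≤ ‖z - ‖z‖ • y‖ := by
      have hmem : y₀ + ‖z‖ • y ∈ F := F.add_mem hy₀F (F.smul_mem _ hy)
      have := Metric.infDist_le_dist_of_mem (x := x) hmem
      rw [dist_eq_norm] at this
      calc d ≤ ‖x - (y₀ + ‖z‖ • y)‖ := this
        _ = ‖z - ‖z‖ • y‖ := by rw [hz]; congr 1; abel
    rw [h1 z, norm_smul, norm_inv, norm_norm, inv_mul_eq_div, le_div_iff₀ hzpos]
    linarith

variable [CompleteSpace X]

/-- Powers of `1 - C` are of the form `1 - D` with `D` compact. -/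
theorem pow_one_sub_compact {C : X →L[ℝ] X} (hC : IsCompactOperator ⇑C) (n : ℕ) :
    ∃ D : X →L[ℝ] X, IsCompactOperator ⇑D ∧
      ((1 : X →L[ℝ] X) - C)^n = 1 - D := by
  induction n with
  | zero => exact ⟨0, isCompactOperator_zero, by simp⟩
  | succ n ih =>
    obtain ⟨D, hD, hDeq⟩ := ih
    refine ⟨C + D - D.comp C, ?_, ?_⟩
    · have h1 : IsCompactOperator (⇑D ∘ ⇑C) := hC.continuous_comp D.continuous
      have h2 : IsCompactOperator ⇑(D.comp C) := h1
      exact (hC.add hD).sub h2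
    · rw [pow_succ, hDeq]
      have : D.comp C = D * C := rfl
      rw [this]
      noncomm_ring

theorem sp_pow_one_sub {C : X →L[ℝ] X} (hC : IsCompactOperator ⇑C) (n : ℕ) :
    SP (((1 : X →L[ℝ] X) - C)^n) := by
  obtain ⟨D, hD, hDeq⟩ := pow_one_sub_compact hC n
  have hone : (1 : X →L[ℝ] X).comp (((1:X→L[ℝ]X) - C)^n) = ContinuousLinearMap.id ℝ X - D := by
    have h2 : (1 : X →L[ℝ] X).comp (((1:X→L[ℝ]X) - C)^n) = ((1:X→L[ℝ]X) - C)^n :=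
      one_mul _
    rw [h2, hDeq]
    rfl
  exact sp_of_left_parametrix _ 1 D hD hone

theorem ker_pow_mono {U : X →L[ℝ] X} {a b : ℕ} (h : a ≤ b) :
    LinearMap.ker (U^a).toLinearMap ≤ LinearMap.ker (U^b).toLinearMap := by
  obtain ⟨c, rfl⟩ := Nat.exists_eq_add_of_le h
  intro x hx
  have : (U^(a+c)) x = (U^c) ((U^a) x) := by
    rw [add_comm, pow_add, ContinuousLinearMap.mul_apply]
  simp only [LinearMap.mem_ker, ContinuousLinearMap.coe_coe] at *
  rw [this, hx, map_zero]

theorem range_pow_anti {U : X →L[ℝ] X} {a b : ℕ} (h : a ≤ b) :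
    LinearMap.range (U^b).toLinearMap ≤ LinearMap.range (U^a).toLinearMap := by
  obtain ⟨c, rfl⟩ := Nat.exists_eq_add_of_le h
  rintro - ⟨x, rfl⟩
  refine ⟨(U^c) x, ?_⟩
  simp only [ContinuousLinearMap.coe_coe]
  rw [pow_add, ContinuousLinearMap.mul_apply]

/-- Kernel chain stabilizes. -/
theorem exists_ker_stab {C : X →L[ℝ] X} (hC : IsCompactOperator ⇑C) :
    ∃ n : ℕ, LinearMap.ker (((1:X→L[ℝ]X) - C)^n).toLinearMap = LinearMap.ker (((1:X→L[ℝ]X) - C)^(n+1)).toLinearMap := by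
  by_contra hcon
  push_neg at hcon
  set U := (1:X→L[ℝ]X) - C with hU
  have hCx : ∀ x : X, C x = x - U x := by intro x; rw [hU]; simp
  have hsel : ∀ n : ℕ, ∃ u : X, u ∈ LinearMap.ker (U^(n+1)).toLinearMap ∧ ‖u‖ = 1 ∧
      ∀ y ∈ LinearMap.ker (U^n).toLinearMap, 1/2 ≤ ‖u - y‖ := by
    intro n
    have hlt : LinearMap.ker (U^n).toLinearMap < LinearMap.ker (U^(n+1)).toLinearMap :=
      lt_of_le_of_ne (ker_pow_mono (Nat.le_succ n)) (hcon n)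
    obtain ⟨x, hxmem, hxnot⟩ := SetLike.exists_of_lt hlt
    have hclosed : IsClosed ((LinearMap.ker (U^n).toLinearMap : Submodule ℝ X) : Set X) :=
      ContinuousLinearMap.isClosed_ker _
    exact exists_norm_one_half hclosed (ker_pow_mono (Nat.le_succ n)) hxmem hxnot
  choose u humem hunorm husep using hsel
  have hsep : ∀ m n : ℕ, m < n → 1/2 ≤ ‖C (u n) - C (u m)‖ := by
    intro m n hmn
    have hv : U (u n) + u m - U (u m) ∈ LinearMap.ker (U^n).toLinearMap := by
      have h1 : U (u n) ∈ LinearMap.ker (U^n).toLinearMap := by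
        rw [LinearMap.mem_ker, ContinuousLinearMap.coe_coe]
        have : (U^n) (U (u n)) = (U^(n+1)) (u n) := by
          rw [pow_succ, ContinuousLinearMap.mul_apply]
        rw [this]
        exact LinearMap.mem_ker.1 (humem n)
      have h2 : u m ∈ LinearMap.ker (U^n).toLinearMap := ker_pow_mono hmn (humem m)
      have h3 : U (u m) ∈ LinearMap.ker (U^n).toLinearMap := by
        apply ker_pow_mono (show m ≤ n from hmn.le)
        rw [LinearMap.mem_ker, ContinuousLinearMap.coe_coe]
        have : (U^m) (U (u m)) = (U^(m+1)) (u m) := by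
          rw [pow_succ, ContinuousLinearMap.mul_apply]
        rw [this]
        exact LinearMap.mem_ker.1 (humem m)
      exact Submodule.sub_mem _ (Submodule.add_mem _ h1 h2) h3
    have : C (u n) - C (u m) = u n - (U (u n) + u m - U (u m)) := by
      rw [hCx, hCx]; abel
    rw [this]
    exact husep n _ hv
  have hubd : ∀ n, ‖u n‖ ≤ 1 := fun n => le_of_eq (hunorm n)
  obtain ⟨φ, hφ, y, hy⟩ := hC.exists_subseq u 1 hubd
  have hcs : CauchySeq (fun k => C (u (φ k))) := hy.cauchySeq
  obtain ⟨N, hN⟩ := Metric.cauchySeq_iff.1 hcs (1/2) (by norm_num)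
  have h1 := hN (N+1) (Nat.le_succ N) N le_rfl
  rw [dist_eq_norm] at h1
  exact absurd (hsep (φ N) (φ (N+1)) (hφ (Nat.lt_succ_self N))) (by linarith)

/-- Range chain stabilizes. -/
theorem exists_range_stab {C : X →L[ℝ] X} (hC : IsCompactOperator ⇑C) :
    ∃ n : ℕ, LinearMap.range (((1:X→L[ℝ]X) - C)^n).toLinearMap = LinearMap.range (((1:X→L[ℝ]X) - C)^(n+1)).toLinearMap := by
  by_contra hcon
  push_neg at hcon
  set U := (1:X→L[ℝ]X) - C with hU
  have hCx : ∀ x : X, C x = x - U x := by intro x; rw [hU]; simp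
  have hsel : ∀ n : ℕ, ∃ u : X, u ∈ LinearMap.range (U^n).toLinearMap ∧ ‖u‖ = 1 ∧
      ∀ y ∈ LinearMap.range (U^(n+1)).toLinearMap, 1/2 ≤ ‖u - y‖ := by
    intro n
    have hlt : LinearMap.range (U^(n+1)).toLinearMap < LinearMap.range (U^n).toLinearMap :=
      lt_of_le_of_ne (range_pow_anti (Nat.le_succ n)) (fun h => hcon n h.symm)
    obtain ⟨x, hxmem, hxnot⟩ := SetLike.exists_of_lt hlt
    have hclosed : IsClosed ((LinearMap.range (U^(n+1)).toLinearMap : Submodule ℝ X) : Set X) :=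
      (sp_pow_one_sub hC (n+1)).isClosed_range
    exact exists_norm_one_half hclosed (range_pow_anti (Nat.le_succ n)) hxmem hxnot
  choose u humem hunorm husep using hsel
  have hsep : ∀ m n : ℕ, m < n → 1/2 ≤ ‖C (u m) - C (u n)‖ := by
    intro m n hmn
    have hv : U (u m) + u n - U (u n) ∈ LinearMap.range (U^(m+1)).toLinearMap := by
      have h1 : U (u m) ∈ LinearMap.range (U^(m+1)).toLinearMap := by
        obtain ⟨x, hx⟩ := humem m
        refine ⟨x, ?_⟩
        rw [← hx]
        have h := congrFun (congrArg (fun (f : X →L[ℝ] X) => ⇑f) (pow_succ' U m)) x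
        exact h
      have h2 : u n ∈ LinearMap.range (U^(m+1)).toLinearMap := range_pow_anti hmn (humem n)
      have h3 : U (u n) ∈ LinearMap.range (U^(m+1)).toLinearMap := by
        apply range_pow_anti (show m+1 ≤ n+1 by omega)
        obtain ⟨x, hx⟩ := humem n
        refine ⟨x, ?_⟩
        rw [← hx]
        have h := congrFun (congrArg (fun (f : X →L[ℝ] X) => ⇑f) (pow_succ' U n)) x
        exact h
      exact Submodule.sub_mem _ (Submodule.add_mem _ h1 h2) h3
    have : C (u m) - C (u n) = u m - (U (u m) + u n - U (u n)) := by
      rw [hCx, hCx]; abel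
    rw [this]
    exact husep m _ hv
  have hubd : ∀ n, ‖u n‖ ≤ 1 := fun n => le_of_eq (hunorm n)
  obtain ⟨φ, hφ, y, hy⟩ := hC.exists_subseq u 1 hubd
  have hcs : CauchySeq (fun k => C (u (φ k))) := hy.cauchySeq
  obtain ⟨N, hN⟩ := Metric.cauchySeq_iff.1 hcs (1/2) (by norm_num)
  have h1 := hN N le_rfl (N+1) (Nat.le_succ N)
  rw [dist_eq_norm] at h1
  exact absurd (hsep (φ N) (φ (N+1)) (hφ (Nat.lt_succ_self N))) (by linarith)

end Chunk4

section Chunk5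

variable {X : Type*} [NormedAddCommGroup X] [NormedSpace ℝ X] [CompleteSpace X]

theorem riesz_main {C : X →L[ℝ] X} (hC : IsCompactOperator ⇑C) :
    FiniteDimensional ℝ (LinearMap.ker ((1:X→L[ℝ]X) - C).toLinearMap) ∧
    IsClosed ((LinearMap.range ((1:X→L[ℝ]X) - C).toLinearMap : Submodule ℝ X) : Set X) ∧
    FiniteDimensional ℝ (X ⧸ LinearMap.range ((1:X→L[ℝ]X) - C).toLinearMap) ∧
    finrank ℝ (X ⧸ LinearMap.range ((1:X→L[ℝ]X) - C).toLinearMap) =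
      finrank ℝ (LinearMap.ker ((1:X→L[ℝ]X) - C).toLinearMap) := by
  set U : X →L[ℝ] X := (1:X→L[ℝ]X) - C with hUdef
  have pow_apply_add : ∀ (a b : ℕ) (x : X), (U^(a+b)) x = (U^a) ((U^b) x) := by
    intro a b x
    rw [pow_add]; rfl
  have pow_succ_apply : ∀ (a : ℕ) (x : X), (U^(a+1)) x = (U^a) (U x) := by
    intro a x
    rw [pow_succ]; rfl
  have pow_succ'_apply : ∀ (a : ℕ) (x : X), (U^(a+1)) x = U ((U^a) x) := by
    intro a x
    rw [pow_succ']; rfl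
  have hsp1 : SP U := by
    have := sp_pow_one_sub hC 1
    rwa [pow_one] at this
  have hkerfd : FiniteDimensional ℝ (LinearMap.ker U.toLinearMap) := hsp1.finiteDimensional_ker
  have hrc : IsClosed ((LinearMap.range U.toLinearMap : Submodule ℝ X) : Set X) := hsp1.isClosed_range
  obtain ⟨p, hp⟩ := exists_ker_stab hC
  obtain ⟨q, hq⟩ := exists_range_stab hC
  rw [← hUdef] at hp hq
  -- propagation
  have kprop : ∀ m : ℕ, LinearMap.ker (U^p).toLinearMap = LinearMap.ker (U^(p+m)).toLinearMap := by
    intro m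
    induction m with
    | zero => rfl
    | succ m ih =>
      apply le_antisymm (ker_pow_mono (by omega))
      intro x hx
      rw [ih]
      have h1 : (U^(p+m+1)) x = (U^(p+1)) ((U^m) x) := by
        rw [show p+m+1 = (p+1)+m by omega]
        exact pow_apply_add (p+1) m x
      rw [LinearMap.mem_ker] at hx
      have h2 : (U^m) x ∈ LinearMap.ker (U^(p+1)).toLinearMap := by
        rw [LinearMap.mem_ker, ContinuousLinearMap.coe_coe, ← h1]
        exact hx
      rw [← hp] at h2
      rw [LinearMap.mem_ker, ContinuousLinearMap.coe_coe]
      have h3 : (U^(p+m)) x = (U^p) ((U^m) x) := pow_apply_add p m x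
      rw [h3]
      exact LinearMap.mem_ker.1 h2
  have rprop : ∀ m : ℕ, LinearMap.range (U^q).toLinearMap = LinearMap.range (U^(q+m)).toLinearMap := by
    intro m
    induction m with
    | zero => rfl
    | succ m ih =>
      apply le_antisymm _ (range_pow_anti (by omega))
      intro y hy
      have hy2 : y ∈ LinearMap.range (U^(q+m)).toLinearMap := ih ▸ hy
      obtain ⟨x, hx⟩ := hy2
      have h1 : (U^q) x ∈ LinearMap.range (U^(q+1)).toLinearMap := by
        rw [← hq]; exact ⟨x, rfl⟩
      obtain ⟨z, hz⟩ := h1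
      refine ⟨z, ?_⟩
      calc (U^(q+(m+1))) z = (U^m) ((U^(q+1)) z) := by
            rw [show q+(m+1) = m+(q+1) by omega]
            exact pow_apply_add m (q+1) z
        _ = (U^m) ((U^q) x) := by exact congrArg _ hz
        _ = (U^(q+m)) x := by
            rw [show q+m = m+q by omega]
            exact (pow_apply_add m q x).symm
        _ = y := hx
  have kstab : ∀ a b : ℕ, p ≤ a → a ≤ b → LinearMap.ker (U^a).toLinearMap = LinearMap.ker (U^b).toLinearMap := by
    intro a b hpa hab
    obtain ⟨c, rfl⟩ := Nat.exists_eq_add_of_le hpa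
    obtain ⟨d, rfl⟩ := Nat.exists_eq_add_of_le hab
    rw [← kprop c, ← show p + (c + d) = p + c + d by omega, ← kprop (c+d)]
  have rstab : ∀ a b : ℕ, q ≤ a → a ≤ b → LinearMap.range (U^a).toLinearMap = LinearMap.range (U^b).toLinearMap := by
    intro a b hqa hab
    obtain ⟨c, rfl⟩ := Nat.exists_eq_add_of_le hqa
    obtain ⟨d, rfl⟩ := Nat.exists_eq_add_of_le hab
    rw [← rprop c, ← show q + (c + d) = q + c + d by omega, ← rprop (c+d)]
  set n := p + q + 1 with hn
  set N := LinearMap.ker (U^n).toLinearMap with hN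
  set R := LinearMap.range (U^n).toLinearMap with hR
  have hNfd : FiniteDimensional ℝ N := (sp_pow_one_sub hC n).finiteDimensional_ker
  have hdisj : ∀ x, x ∈ N → x ∈ R → x = 0 := by
    intro x hxN hxR
    obtain ⟨y, rfl⟩ := hxR
    have h1 : (U^(n+n)) y = 0 := by
      rw [pow_apply_add]
      exact LinearMap.mem_ker.1 hxN
    have h2 : y ∈ LinearMap.ker (U^n).toLinearMap := by
      rw [kstab n (n+n) (by omega) (by omega)]
      exact LinearMap.mem_ker.2 h1
    exact LinearMap.mem_ker.1 h2
  have hsup : ∀ x : X, ∃ a b : X, a ∈ N ∧ b ∈ R ∧ x = a + b := by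
    intro x
    have h1 : (U^n) x ∈ LinearMap.range (U^n).toLinearMap := ⟨x, rfl⟩
    rw [rstab n (n+n) (by omega) (by omega)] at h1
    obtain ⟨z, hz⟩ := h1
    refine ⟨x - (U^n) z, (U^n) z, ?_, ⟨z, rfl⟩, by abel⟩
    rw [hN, LinearMap.mem_ker, ContinuousLinearMap.coe_coe, map_sub]
    have : (U^n) ((U^n) z) = (U^(n+n)) z := (pow_apply_add n n z).symm
    rw [this, show (U^(n+n)) z = (U^n) x from hz, sub_self]
  have hUN : ∀ x ∈ N, U x ∈ N := by
    intro x hx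
    rw [hN, LinearMap.mem_ker, ContinuousLinearMap.coe_coe]
    have h1 : (U^n) (U x) = (U^(n+1)) x := (pow_succ_apply n x).symm
    rw [h1]
    exact LinearMap.mem_ker.1 (ker_pow_mono (Nat.le_succ n) hx)
  have hRleU : R ≤ LinearMap.range U.toLinearMap := by
    have := range_pow_anti (U := U) (show 1 ≤ n by omega)
    rwa [pow_one] at this
  have hkerleN : LinearMap.ker U.toLinearMap ≤ N := by
    have := ker_pow_mono (U := U) (show 1 ≤ n by omega)
    rwa [pow_one] at this
  -- coker finite-dimensional
  set f : N →ₗ[ℝ] X ⧸ LinearMap.range U.toLinearMap := (LinearMap.range U.toLinearMap).mkQ.comp N.subtype with hf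
  have hfsurj : Function.Surjective f := by
    intro c
    obtain ⟨x, rfl⟩ := Submodule.Quotient.mk_surjective _ c
    obtain ⟨a, b, haN, hbR, rfl⟩ := hsup x
    refine ⟨⟨a, haN⟩, ?_⟩
    rw [hf]
    simp only [LinearMap.comp_apply, Submodule.coe_subtype, Submodule.mkQ_apply]
    rw [Submodule.Quotient.eq]
    have : a - (a + b) = -b := by abel
    rw [this]
    exact Submodule.neg_mem _ (hRleU hbR)
  have hcokerfd : FiniteDimensional ℝ (X ⧸ LinearMap.range U.toLinearMap) :=
    Module.Finite.of_surjective f hfsurj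
  -- rank computation
  have hUN' : ∀ x ∈ N, (U : X →ₗ[ℝ] X) x ∈ N := hUN
  set g : N →ₗ[ℝ] N := (U : X →ₗ[ℝ] X).restrict hUN' with hg
  have h_f : finrank ℝ (LinearMap.range f) + finrank ℝ (LinearMap.ker f) = finrank ℝ N :=
    LinearMap.finrank_range_add_finrank_ker f
  have h_g : finrank ℝ (LinearMap.range g) + finrank ℝ (LinearMap.ker g) = finrank ℝ N :=
    LinearMap.finrank_range_add_finrank_ker g
  have hfr : LinearMap.range f = ⊤ := LinearMap.range_eq_top.2 hfsurj
  have hrange_f : finrank ℝ (LinearMap.range f) = finrank ℝ (X ⧸ LinearMap.range U.toLinearMap) := by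
    rw [hfr]
    exact finrank_top ℝ _
  have hkf_rg : LinearMap.ker f = LinearMap.range g := by
    ext a
    constructor
    · intro ha
      have h1 : (a : X) ∈ LinearMap.range U.toLinearMap := by
        have := LinearMap.mem_ker.1 ha
        rw [hf] at this
        simp only [LinearMap.comp_apply, Submodule.coe_subtype, Submodule.mkQ_apply] at this
        rwa [Submodule.Quotient.mk_eq_zero] at this
      obtain ⟨z, hz⟩ := h1
      obtain ⟨zN, zR, hzN, hzR, rfl⟩ := hsup z
      have hUzR : U zR ∈ R := by
        obtain ⟨w, rfl⟩ := hzR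
        have : U ((U^n).toLinearMap w) = (U^(n+1)) w := (pow_succ'_apply n w).symm
        rw [this, hR, rstab n (n+1) (by omega) (by omega)]
        exact ⟨w, rfl⟩
      have hdiff : (a : X) - U zN ∈ N := Submodule.sub_mem _ a.2 (hUN zN hzN)
      have hdiff2 : (a : X) - U zN ∈ R := by
        have : (a : X) - U zN = U zR := by
          rw [← hz, map_add, ContinuousLinearMap.coe_coe]; abel
        rw [this]; exact hUzR
      have h0 : (a : X) - U zN = 0 := hdisj _ hdiff hdiff2
      refine ⟨⟨zN, hzN⟩, ?_⟩
      apply Subtype.ext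
      rw [hg]
      simp only [LinearMap.restrict_apply]
      have : (a : X) = U zN := by
        have := sub_eq_zero.1 h0; exact this
      exact this.symm
    · rintro ⟨b, rfl⟩
      rw [LinearMap.mem_ker, hf]
      simp only [LinearMap.comp_apply, Submodule.coe_subtype, Submodule.mkQ_apply]
      rw [Submodule.Quotient.mk_eq_zero]
      rw [hg]
      simp only [LinearMap.restrict_apply]
      exact ⟨b, rfl⟩
  have hmap_kg : Submodule.map N.subtype (LinearMap.ker g) = LinearMap.ker U.toLinearMap := by
    ext x
    constructor
    · rintro ⟨⟨b, hbN⟩, hb, rfl⟩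
      have : U b = 0 := by
        have := congrArg Subtype.val (LinearMap.mem_ker.1 hb)
        rw [hg] at this
        simpa using this
      exact LinearMap.mem_ker.2 this
    · intro hx
      refine Submodule.mem_map.2 ⟨⟨x, hkerleN hx⟩, ?_, rfl⟩
      rw [LinearMap.mem_ker]
      apply Subtype.ext
      rw [hg]
      simpa using LinearMap.mem_ker.1 hx
  have hkg : finrank ℝ (LinearMap.ker g) = finrank ℝ (LinearMap.ker U.toLinearMap) := by
    rw [← hmap_kg]
    exact (Submodule.equivMapOfInjective N.subtype (Submodule.injective_subtype N)
      (LinearMap.ker g)).finrank_eq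
  have hfinal : finrank ℝ (X ⧸ LinearMap.range U.toLinearMap) = finrank ℝ (LinearMap.ker U.toLinearMap) := by
    have e1 := h_f
    rw [hrange_f, hkf_rg] at e1
    rw [hkg] at h_g
    omega
  exact ⟨hkerfd, hrc, hcokerfd, hfinal⟩

end Chunk5

section Chunk6

variable {V W Z : Type*} [AddCommGroup V] [Module ℝ V] [AddCommGroup W] [Module ℝ W]
  [AddCommGroup Z] [Module ℝ Z]

theorem fd_of_ker_range (f : V →ₗ[ℝ] W) (h1 : FiniteDimensional ℝ (LinearMap.ker f))
    (h2 : FiniteDimensional ℝ (LinearMap.range f)) : FiniteDimensional ℝ V := by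
  have hfg : (⊤ : Submodule ℝ V).FG := by
    apply Submodule.fg_of_fg_map_of_fg_inf_ker f
    · rw [Submodule.map_top]
      exact (Submodule.fg_top _).1 (Module.finite_def.1 h2)
    · rw [top_inf_eq]
      exact (Submodule.fg_top _).1 (Module.finite_def.1 h1)
  exact Module.finite_def.2 hfg

theorem submodule_fd_of_le {p q : Submodule ℝ W} (h : p ≤ q) [FiniteDimensional ℝ q] :
    FiniteDimensional ℝ p :=
  Submodule.finiteDimensional_of_le h

theorem index_additivity (T : V →ₗ[ℝ] W) (S : W →ₗ[ℝ] Z)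
    (hkT : FiniteDimensional ℝ (LinearMap.ker T)) (hkS : FiniteDimensional ℝ (LinearMap.ker S))
    (hcT : FiniteDimensional ℝ (W ⧸ LinearMap.range T))
    (hcS : FiniteDimensional ℝ (Z ⧸ LinearMap.range S)) :
    FiniteDimensional ℝ (LinearMap.ker (S ∘ₗ T)) ∧
    FiniteDimensional ℝ (Z ⧸ LinearMap.range (S ∘ₗ T)) ∧
    (finrank ℝ (LinearMap.ker (S ∘ₗ T)) : ℤ) - finrank ℝ (Z ⧸ LinearMap.range (S ∘ₗ T)) =
      ((finrank ℝ (LinearMap.ker S) : ℤ) - finrank ℝ (Z ⧸ LinearMap.range S)) +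
      ((finrank ℝ (LinearMap.ker T) : ℤ) - finrank ℝ (W ⧸ LinearMap.range T)) := by
  classical
  haveI := hkT; haveI := hkS; haveI := hcT; haveI := hcS
  -- f₁ : ker (S∘T) → W
  set f₁ : LinearMap.ker (S ∘ₗ T) →ₗ[ℝ] W := T.domRestrict (LinearMap.ker (S ∘ₗ T)) with hf₁
  have hmapk₁ : Submodule.map (LinearMap.ker (S ∘ₗ T)).subtype (LinearMap.ker f₁)
      = LinearMap.ker T := by
    ext x
    constructor
    · rintro ⟨⟨b, hb⟩, hbk, rfl⟩
      have : T b = 0 := hbk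
      exact LinearMap.mem_ker.2 this
    · intro hx
      have hx2 : x ∈ LinearMap.ker (S ∘ₗ T) := by
        rw [LinearMap.mem_ker, LinearMap.comp_apply, LinearMap.mem_ker.1 hx, map_zero]
      exact Submodule.mem_map.2 ⟨⟨x, hx2⟩, LinearMap.mem_ker.1 hx, rfl⟩
  have hrange₁ : LinearMap.range f₁ = LinearMap.range T ⊓ LinearMap.ker S := by
    ext y
    constructor
    · rintro ⟨⟨b, hb⟩, rfl⟩
      refine ⟨⟨b, rfl⟩, ?_⟩
      exact hb
    · rintro ⟨⟨b, rfl⟩, hyk⟩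
      have hb : b ∈ LinearMap.ker (S ∘ₗ T) := hyk
      exact ⟨⟨b, hb⟩, rfl⟩
  have hkerf₁fd : FiniteDimensional ℝ (LinearMap.ker f₁) := by
    haveI : FiniteDimensional ℝ
        (Submodule.map (LinearMap.ker (S ∘ₗ T)).subtype (LinearMap.ker f₁)) := by
      rw [hmapk₁]; exact hkT
    exact (Submodule.equivMapOfInjective _ (Submodule.injective_subtype _)
      (LinearMap.ker f₁)).symm.finiteDimensional
  have hrangef₁fd : FiniteDimensional ℝ (LinearMap.range f₁) := by
    rw [hrange₁]
    exact submodule_fd_of_le inf_le_right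
  have hkSTfd : FiniteDimensional ℝ (LinearMap.ker (S ∘ₗ T)) := fd_of_ker_range f₁ hkerf₁fd hrangef₁fd
  have hA1 : finrank ℝ (LinearMap.ker (S ∘ₗ T)) =
      finrank ℝ (LinearMap.range T ⊓ LinearMap.ker S : Submodule ℝ W) +
      finrank ℝ (LinearMap.ker T) := by
    have h := LinearMap.finrank_range_add_finrank_ker f₁
    rw [hrange₁] at h
    have h2 : finrank ℝ (LinearMap.ker f₁) = finrank ℝ (LinearMap.ker T) := by
      rw [← hmapk₁]
      exact (Submodule.equivMapOfInjective _ (Submodule.injective_subtype _)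
        (LinearMap.ker f₁)).finrank_eq
    omega
  -- f₂ : ker S → W ⧸ range T
  set f₂ : LinearMap.ker S →ₗ[ℝ] W ⧸ LinearMap.range T :=
    (LinearMap.range T).mkQ.domRestrict (LinearMap.ker S) with hf₂
  have hmapk₂ : Submodule.map (LinearMap.ker S).subtype (LinearMap.ker f₂)
      = LinearMap.range T ⊓ LinearMap.ker S := by
    ext x
    constructor
    · rintro ⟨⟨b, hb⟩, hbk, rfl⟩
      have : (LinearMap.range T).mkQ b = 0 := hbk
      rw [Submodule.mkQ_apply, Submodule.Quotient.mk_eq_zero] at this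
      exact ⟨this, hb⟩
    · rintro ⟨hxr, hxk⟩
      refine Submodule.mem_map.2 ⟨⟨x, hxk⟩, ?_, rfl⟩
      show (LinearMap.range T).mkQ x = 0
      rw [Submodule.mkQ_apply, Submodule.Quotient.mk_eq_zero]
      exact hxr
  have hA2 : finrank ℝ (LinearMap.ker S) =
      finrank ℝ (LinearMap.range f₂) +
      finrank ℝ (LinearMap.range T ⊓ LinearMap.ker S : Submodule ℝ W) := by
    have h := LinearMap.finrank_range_add_finrank_ker f₂
    have h2 : finrank ℝ (LinearMap.ker f₂) =
        finrank ℝ (LinearMap.range T ⊓ LinearMap.ker S : Submodule ℝ W) := by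
      rw [← hmapk₂]
      exact (Submodule.equivMapOfInjective _ (Submodule.injective_subtype _)
        (LinearMap.ker f₂)).finrank_eq
    omega
  -- f₃ : quotient by M₂ := range f₂
  set M₂ := LinearMap.range f₂ with hM₂
  have hA3 : finrank ℝ (W ⧸ LinearMap.range T) =
      finrank ℝ ((W ⧸ LinearMap.range T) ⧸ M₂) + finrank ℝ M₂ := by
    have h := LinearMap.finrank_range_add_finrank_ker M₂.mkQ
    rw [Submodule.ker_mkQ, Submodule.range_mkQ] at h
    rw [finrank_top] at h
    omega
  -- identify (W ⧸ range T) ⧸ M₂ with W ⧸ (range T ⊔ ker S)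
  have hM₂eq : Submodule.map (LinearMap.range T).mkQ (LinearMap.range T ⊔ LinearMap.ker S)
      = M₂ := by
    rw [Submodule.map_sup]
    have h1 : Submodule.map (LinearMap.range T).mkQ (LinearMap.range T) = ⊥ := by
      ext c
      constructor
      · rintro ⟨x, hx, rfl⟩
        simpa [Submodule.mkQ_apply, Submodule.Quotient.mk_eq_zero] using hx
      · intro hc
        rw [Submodule.mem_bot] at hc
        subst hc
        exact ⟨0, Submodule.zero_mem _, map_zero _⟩
    have h2 : Submodule.map (LinearMap.range T).mkQ (LinearMap.ker S) = M₂ := by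
      rw [hM₂, hf₂]
      ext c
      constructor
      · rintro ⟨x, hx, rfl⟩
        exact ⟨⟨x, hx⟩, rfl⟩
      · rintro ⟨⟨x, hx⟩, rfl⟩
        exact ⟨x, hx, rfl⟩
    rw [h1, h2, bot_sup_eq]
  have hquot_equiv : ((W ⧸ LinearMap.range T) ⧸ M₂) ≃ₗ[ℝ]
      W ⧸ (LinearMap.range T ⊔ LinearMap.ker S) := by
    have := Submodule.quotientQuotientEquivQuotient (LinearMap.range T)
      (LinearMap.range T ⊔ LinearMap.ker S) le_sup_left
    rw [hM₂eq] at this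
    exact this
  -- ψ : W → Z ⧸ range (S∘T)
  set ψ : W →ₗ[ℝ] Z ⧸ LinearMap.range (S ∘ₗ T) := (LinearMap.range (S ∘ₗ T)).mkQ.comp S with hψ
  have hkerψ : LinearMap.ker ψ = LinearMap.range T ⊔ LinearMap.ker S := by
    ext y
    constructor
    · intro hy
      have : S y ∈ LinearMap.range (S ∘ₗ T) := by
        have := LinearMap.mem_ker.1 hy
        rw [hψ, LinearMap.comp_apply, Submodule.mkQ_apply, Submodule.Quotient.mk_eq_zero] at this
        exact this
      obtain ⟨x, hx⟩ := this
      have h1 : y - T x ∈ LinearMap.ker S := by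
        rw [LinearMap.mem_ker, map_sub]
        rw [LinearMap.comp_apply] at hx
        rw [hx, sub_self]
      have : y = T x + (y - T x) := by abel
      rw [this]
      exact Submodule.add_mem _ (Submodule.mem_sup_left ⟨x, rfl⟩) (Submodule.mem_sup_right h1)
    · intro hy
      obtain ⟨r, hr, k, hk, rfl⟩ := Submodule.mem_sup.1 hy
      obtain ⟨x, rfl⟩ := hr
      rw [LinearMap.mem_ker, hψ, LinearMap.comp_apply, map_add, LinearMap.mem_ker.1 hk, add_zero,
        Submodule.mkQ_apply, Submodule.Quotient.mk_eq_zero]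
      exact ⟨x, rfl⟩
  have hrangeψ_equiv : (W ⧸ (LinearMap.range T ⊔ LinearMap.ker S)) ≃ₗ[ℝ]
      LinearMap.range ψ := by
    have := ψ.quotKerEquivRange
    rw [hkerψ] at this
    exact this
  -- fd of W ⧸ sup
  have hsupfd : FiniteDimensional ℝ (W ⧸ (LinearMap.range T ⊔ LinearMap.ker S)) := by
    have hsurj : Function.Surjective (Submodule.mapQ (LinearMap.range T)
        (LinearMap.range T ⊔ LinearMap.ker S) LinearMap.id (by
          intro x hx
          exact Submodule.mem_sup_left hx)) := by
      intro c
      obtain ⟨z, rfl⟩ := Submodule.Quotient.mk_surjective _ c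
      exact ⟨Submodule.Quotient.mk z, rfl⟩
    exact Module.Finite.of_surjective _ hsurj
  have hrangeψfd : FiniteDimensional ℝ (LinearMap.range ψ) := hrangeψ_equiv.finiteDimensional
  -- f₄ : Z ⧸ range (S∘T) → Z ⧸ range S
  have hST_le : LinearMap.range (S ∘ₗ T) ≤ (LinearMap.range S).comap LinearMap.id := by
    rintro - ⟨x, rfl⟩
    exact ⟨T x, rfl⟩
  set f₄ : (Z ⧸ LinearMap.range (S ∘ₗ T)) →ₗ[ℝ] Z ⧸ LinearMap.range S :=
    Submodule.mapQ _ _ LinearMap.id hST_le with hf₄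
  have hkerf₄ : LinearMap.ker f₄ = LinearMap.range ψ := by
    ext c
    obtain ⟨z, rfl⟩ := Submodule.Quotient.mk_surjective _ c
    constructor
    · intro hc
      have : z ∈ LinearMap.range S := by
        have h1 : f₄ (Submodule.Quotient.mk z) = Submodule.Quotient.mk z := by
          rw [hf₄, Submodule.mapQ_apply]; rfl
        have h2 := LinearMap.mem_ker.1 hc
        rw [h1, Submodule.Quotient.mk_eq_zero] at h2
        exact h2
      obtain ⟨w, rfl⟩ := this
      exact ⟨w, rfl⟩
    · rintro ⟨w, hw⟩
      rw [LinearMap.mem_ker, hf₄, Submodule.mapQ_apply]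
      have hw' : (Submodule.Quotient.mk (S w) : Z ⧸ LinearMap.range (S ∘ₗ T)) =
          Submodule.Quotient.mk z := hw
      have : S w - z ∈ LinearMap.range (S ∘ₗ T) := (Submodule.Quotient.eq _).1 hw'
      have hz : z ∈ LinearMap.range S := by
        obtain ⟨x, hx⟩ := this
        refine ⟨w - T x, ?_⟩
        rw [map_sub]
        rw [LinearMap.comp_apply] at hx
        rw [hx]
        abel
      rw [show LinearMap.id z = z from rfl, Submodule.Quotient.mk_eq_zero]
      exact hz
  have hf₄surj : Function.Surjective f₄ := by
    intro c
    obtain ⟨z, rfl⟩ := Submodule.Quotient.mk_surjective _ c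
    refine ⟨Submodule.Quotient.mk z, ?_⟩
    rw [hf₄, Submodule.mapQ_apply]; rfl
  have hkerf₄fd : FiniteDimensional ℝ (LinearMap.ker f₄) := by
    rw [hkerf₄]; exact hrangeψfd
  have hcSTfd : FiniteDimensional ℝ (Z ⧸ LinearMap.range (S ∘ₗ T)) := by
    apply fd_of_ker_range f₄ hkerf₄fd
    rw [LinearMap.range_eq_top.2 hf₄surj]
    infer_instance
  have hA4 : finrank ℝ (Z ⧸ LinearMap.range (S ∘ₗ T)) =
      finrank ℝ (Z ⧸ LinearMap.range S) + finrank ℝ (LinearMap.range ψ) := by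
    have h := LinearMap.finrank_range_add_finrank_ker f₄
    rw [hkerf₄, LinearMap.range_eq_top.2 hf₄surj, finrank_top] at h
    omega
  -- connect dimensions
  have hdim1 : finrank ℝ M₂ = finrank ℝ (LinearMap.range f₂) := rfl
  have hdim2 : finrank ℝ ((W ⧸ LinearMap.range T) ⧸ M₂) = finrank ℝ (LinearMap.range ψ) := by
    rw [hquot_equiv.finrank_eq, hrangeψ_equiv.finrank_eq]
  refine ⟨hkSTfd, hcSTfd, ?_⟩
  have e1 := hA1
  have e2 := hA2
  have e3 := hA3
  have e4 := hA4
  rw [hdim2] at e3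
  push_cast
  omega

end Chunk6

section Chunk7

variable {X Y : Type*} [NormedAddCommGroup X] [NormedSpace ℝ X] [CompleteSpace X]
  [NormedAddCommGroup Y] [NormedSpace ℝ Y] [CompleteSpace Y]

set_option maxHeartbeats 2000000 in
/-- The sum of a left-Fredholm operator and a compact operator is left-Fredholm. -/
theorem leftFredholm_add_compact (L : X →L[ℝ] Y) (hL : LeftFredholm L)
    (K : X →L[ℝ] Y) (hK : IsCompactOperator ⇑K) : LeftFredholm (L + K) := by
  obtain ⟨hker, ⟨X₁, hX₁c, hX₁⟩, hrc, ⟨Y₂, hY₂c, hY₂⟩⟩ := hL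
  obtain ⟨S, P, Q, hSL, hLS, hPmem, hQmem, hkerS, hrangeS⟩ :=
    exists_parametrix L hX₁c hX₁ hrc hY₂c hY₂
  set T := L + K with hT
  haveI : FiniteDimensional ℝ (LinearMap.ker L.toLinearMap) := hker
  have hPfd : FiniteDimensional ℝ (LinearMap.range P.toLinearMap) :=
    submodule_fd_of_le (by rintro - ⟨x, rfl⟩; exact hPmem x)
  have hPcpt : IsCompactOperator ⇑P := isCompactOperator_of_finiteDimensional_range P hPfd
  set C₁ : X →L[ℝ] X := P - S.comp K with hC₁def
  have hC₁ : IsCompactOperator ⇑C₁ := by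
    have h1 : IsCompactOperator ⇑(S.comp K) := hK.continuous_comp S.continuous
    exact hPcpt.sub h1
  set U : X →L[ℝ] X := (1 : X →L[ℝ] X) - C₁ with hUdef
  have hST : S.comp T = ContinuousLinearMap.id ℝ X - C₁ := by
    rw [hT, ContinuousLinearMap.comp_add, hSL, hC₁def]
    abel
  have hSTU : S.comp T = U := by
    rw [hST, hUdef]; rfl
  have hsp : SP T := sp_of_left_parametrix T S C₁ hC₁ hST
  have hTk : FiniteDimensional ℝ (LinearMap.ker T.toLinearMap) := hsp.finiteDimensional_ker
  have hTrc : IsClosed ((LinearMap.range T.toLinearMap : Submodule ℝ Y) : Set Y) := hsp.isClosed_range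
  haveI := hTk
  obtain ⟨X₁', hX₁'c, hX₁'⟩ :=
    (Submodule.ClosedComplemented.of_finiteDimensional (LinearMap.ker T.toLinearMap)).exists_isClosed_isCompl
  -- Riesz for U
  obtain ⟨hUk, hUrc, hUcok, hUind⟩ := riesz_main hC₁
  haveI := hUk
  haveI := hUcok
  obtain ⟨X₂, hX₂c, hX₂⟩ :=
    (Submodule.ClosedComplemented.of_finiteDimensional (LinearMap.ker U.toLinearMap)).exists_isClosed_isCompl
  obtain ⟨Z₂, hZ₂c, hZ₂⟩ :=
    (Submodule.ClosedComplemented.of_quotient_finiteDimensional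
      (p := LinearMap.range U.toLinearMap) hUrc).exists_isClosed_isCompl
  obtain ⟨G, PM, QM, hGU, -, hPMmem, -, -, -⟩ := exists_parametrix U hX₂c hX₂ hUrc hZ₂c hZ₂
  set S' : Y →L[ℝ] X := G.comp S with hS'def
  have hS'T : ∀ x : X, S' (T x) = x - PM x := by
    intro x
    have h1 : S' (T x) = G (S (T x)) := rfl
    have h2 : S (T x) = U x := by
      have := congrArg (fun f : X →L[ℝ] X => f x) hSTU
      simpa using this
    have h3 := congrArg (fun f : X →L[ℝ] X => f x) hGU
    simp only [ContinuousLinearMap.comp_apply, ContinuousLinearMap.sub_apply,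
      ContinuousLinearMap.id_apply] at h3
    rw [h1, h2, h3]
  -- the equivalence X₁' ≃L range T
  obtain ⟨e, he⟩ := exists_restrEquiv T X₁' hX₁'c hX₁' hTrc
  -- finite basis of M := ker U
  set M := LinearMap.ker U.toLinearMap with hM
  set b := Module.finBasis ℝ M with hb
  set m := finrank ℝ M with hm
  -- ρ : range T →L M
  set inner : (LinearMap.range T.toLinearMap : Submodule ℝ Y) →L[ℝ] X :=
    PM.comp (X₁'.subtypeL.comp (e.symm : (LinearMap.range T.toLinearMap : Submodule ℝ Y) →L[ℝ] X₁')) with hinner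
  set ρ : (LinearMap.range T.toLinearMap : Submodule ℝ Y) →L[ℝ] M :=
    inner.codRestrict M (fun y => hPMmem _) with hρ
  -- coordinates
  set c : Fin m → (M →L[ℝ] ℝ) := fun i => LinearMap.toContinuousLinearMap (b.coord i) with hc
  have hext : ∀ i : Fin m, ∃ g : Y →L[ℝ] ℝ,
      ∀ y : (LinearMap.range T.toLinearMap : Submodule ℝ Y), g y = (c i) (ρ y) := by
    intro i
    obtain ⟨g, hg, -⟩ := exists_extension_norm_eq (LinearMap.range T.toLinearMap) ((c i).comp ρ)
    exact ⟨g, fun y => hg y⟩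
  choose g hg using hext
  set Ft : Y →L[ℝ] X := ∑ i : Fin m, (g i).smulRight ((b i : X)) with hFt
  set G' : Y →L[ℝ] X := S' + Ft with hG'
  set π : Y →L[ℝ] Y := T.comp G' with hπ
  have hπ_range : ∀ y : Y, π y ∈ LinearMap.range T.toLinearMap := fun y => ⟨G' y, rfl⟩
  have hπ_fix : ∀ (y : Y) (hy : y ∈ LinearMap.range T.toLinearMap), π y = y := by
    intro y hy
    set x : X₁' := e.symm ⟨y, hy⟩ with hx
    have hTx : T (x : X) = y := by
      have h1 := he x
      rw [hx, ContinuousLinearEquiv.apply_symm_apply] at h1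
      exact h1.symm
    have hS'y : S' y = (x : X) - PM (x : X) := by
      rw [← hTx]; exact hS'T (x : X)
    have hFty : Ft y = PM (x : X) := by
      rw [hFt]
      have happ : (∑ i : Fin m, (g i).smulRight ((b i : X))) y
          = ∑ i : Fin m, (g i y) • ((b i : X)) := by
        simp [ContinuousLinearMap.sum_apply]
      rw [happ]
      have hρy : ρ ⟨y, hy⟩ = ⟨PM (x : X), hPMmem _⟩ := by
        apply Subtype.ext
        rw [hρ]
        simp only [ContinuousLinearMap.coe_codRestrict_apply]
        show inner ⟨y, hy⟩ = PM (x : X)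
        rw [hinner]
        simp only [ContinuousLinearMap.comp_apply, Submodule.subtypeL_apply,
          ContinuousLinearEquiv.coe_coe]
        rfl
      have hgy : ∀ i, g i y = b.repr (ρ ⟨y, hy⟩) i := by
        intro i
        have := hg i ⟨y, hy⟩
        rw [this, hc]
        simp [Basis.coord_apply]
      calc ∑ i : Fin m, (g i y) • ((b i : X))
          = ∑ i : Fin m, (b.repr (ρ ⟨y, hy⟩) i) • ((b i : X)) := by
            apply Finset.sum_congr rfl
            intro i _
            rw [hgy i]
        _ = ((∑ i : Fin m, (b.repr (ρ ⟨y, hy⟩) i) • (b i) : M) : X) := by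
            push_cast
            rfl
        _ = ((ρ ⟨y, hy⟩ : M) : X) := by
            congr 1
            exact b.sum_repr _
        _ = PM (x : X) := by rw [hρy]
    have : G' y = (x : X) := by
      rw [hG']
      simp only [ContinuousLinearMap.add_apply]
      rw [hS'y, hFty]
      abel
    rw [hπ]
    simp only [ContinuousLinearMap.comp_apply]
    rw [this, hTx]
  have hcompl_range : IsCompl (LinearMap.range T.toLinearMap) (LinearMap.ker π.toLinearMap) := by
    constructor
    · rw [disjoint_iff]
      rw [Submodule.eq_bot_iff]
      rintro y ⟨hy1, hy2⟩
      have : π y = 0 := hy2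
      rw [hπ_fix y hy1] at this
      exact this
    · rw [codisjoint_iff, Submodule.eq_top_iff']
      intro y
      apply Submodule.mem_sup.2
      refine ⟨π y, hπ_range y, y - π y, ?_, by abel⟩
      have : π (y - π y) = 0 := by
        rw [map_sub, hπ_fix (π y) (hπ_range y), sub_self]
      exact this
  exact ⟨hTk, ⟨X₁', hX₁'c, hX₁'⟩, hTrc,
    ⟨LinearMap.ker π.toLinearMap, ContinuousLinearMap.isClosed_ker π, hcompl_range⟩⟩

/-- Finite-dimensional cokernel is preserved. -/
theorem coker_fd_add_compact (L : X →L[ℝ] Y) (hL : LeftFredholm L)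
    (K : X →L[ℝ] Y) (hK : IsCompactOperator ⇑K)
    (hcok : FiniteDimensional ℝ (Y ⧸ LinearMap.range L.toLinearMap)) :
    FiniteDimensional ℝ (Y ⧸ LinearMap.range (L + K).toLinearMap) := by
  obtain ⟨hker, ⟨X₁, hX₁c, hX₁⟩, hrc, ⟨Y₂, hY₂c, hY₂⟩⟩ := hL
  obtain ⟨S, P, Q, hSL, hLS, hPmem, hQmem, hkerS, hrangeS⟩ :=
    exists_parametrix L hX₁c hX₁ hrc hY₂c hY₂
  set T := L + K with hT
  haveI hY₂fd : FiniteDimensional ℝ Y₂ := (fd_quot_iff_compl hY₂).1 hcok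
  have hQfd : FiniteDimensional ℝ (LinearMap.range Q.toLinearMap) :=
    submodule_fd_of_le (by rintro - ⟨y, rfl⟩; exact hQmem y)
  have hQcpt : IsCompactOperator ⇑Q := isCompactOperator_of_finiteDimensional_range Q hQfd
  set C₂ : Y →L[ℝ] Y := Q - K.comp S with hC₂def
  have hC₂ : IsCompactOperator ⇑C₂ := by
    have h1 : IsCompactOperator ⇑(K.comp S) := (hK.comp_clm S : IsCompactOperator (⇑K ∘ ⇑S))
    exact hQcpt.sub h1
  have hTS : T.comp S = (1 : Y →L[ℝ] Y) - C₂ := by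
    rw [hT, ContinuousLinearMap.add_comp, hLS, hC₂def]
    have : ContinuousLinearMap.id ℝ Y = (1 : Y →L[ℝ] Y) := rfl
    rw [this]
    abel
  obtain ⟨-, -, hVcok, -⟩ := riesz_main hC₂
  haveI := hVcok
  have hle : LinearMap.range ((1 : Y →L[ℝ] Y) - C₂).toLinearMap ≤ LinearMap.range T.toLinearMap := by
    rw [← hTS]
    rintro - ⟨y, rfl⟩
    exact ⟨S y, rfl⟩
  have hsurj : Function.Surjective
      (Submodule.mapQ (LinearMap.range ((1 : Y →L[ℝ] Y) - C₂).toLinearMap) (LinearMap.range T.toLinearMap)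
        LinearMap.id (fun y hy => hle hy)) := by
    intro cc
    obtain ⟨z, rfl⟩ := Submodule.Quotient.mk_surjective _ cc
    exact ⟨Submodule.Quotient.mk z, by rw [Submodule.mapQ_apply]; rfl⟩
  exact Module.Finite.of_surjective _ hsurj

end Chunk7

section Chunk8

variable {X Y : Type*} [NormedAddCommGroup X] [NormedSpace ℝ X] [CompleteSpace X]
  [NormedAddCommGroup Y] [NormedSpace ℝ Y] [CompleteSpace Y]

set_option maxHeartbeats 1000000 in
theorem index_eq_add_compact (L : X →L[ℝ] Y) (hL : LeftFredholm L)
    (K : X →L[ℝ] Y) (hK : IsCompactOperator ⇑K)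
    (hcokL : FiniteDimensional ℝ (Y ⧸ LinearMap.range L.toLinearMap))
    (hcokT : FiniteDimensional ℝ (Y ⧸ LinearMap.range (L + K).toLinearMap)) :
    (finrank ℝ (LinearMap.ker (L + K).toLinearMap) : ℤ) - finrank ℝ (Y ⧸ LinearMap.range (L + K).toLinearMap) =
      (finrank ℝ (LinearMap.ker L.toLinearMap) : ℤ) - finrank ℝ (Y ⧸ LinearMap.range L.toLinearMap) := by
  obtain ⟨hker, ⟨X₁, hX₁c, hX₁⟩, hrc, ⟨Y₂, hY₂c, hY₂⟩⟩ := hL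
  obtain ⟨S, P, Q, hSL, hLS, hPmem, hQmem, hkerS, hrangeS⟩ :=
    exists_parametrix L hX₁c hX₁ hrc hY₂c hY₂
  set T := L + K with hT
  haveI : FiniteDimensional ℝ (LinearMap.ker L.toLinearMap) := hker
  have hPfd : FiniteDimensional ℝ (LinearMap.range P.toLinearMap) :=
    submodule_fd_of_le (by rintro - ⟨x, rfl⟩; exact hPmem x)
  have hPcpt : IsCompactOperator ⇑P := isCompactOperator_of_finiteDimensional_range P hPfd
  set C₁ : X →L[ℝ] X := P - S.comp K with hC₁def
  have hC₁ : IsCompactOperator ⇑C₁ := by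
    have h1 : IsCompactOperator ⇑(S.comp K) := hK.continuous_comp S.continuous
    exact hPcpt.sub h1
  set U : X →L[ℝ] X := (1 : X →L[ℝ] X) - C₁ with hUdef
  have hST : S.comp T = ContinuousLinearMap.id ℝ X - C₁ := by
    rw [hT, ContinuousLinearMap.comp_add, hSL, hC₁def]
    abel
  have hSTU : S.comp T = U := by rw [hST, hUdef]; rfl
  have hsp : SP T := sp_of_left_parametrix T S C₁ hC₁ hST
  have hTk : FiniteDimensional ℝ (LinearMap.ker T.toLinearMap) := hsp.finiteDimensional_ker
  obtain ⟨hUk, hUrc, hUcok, hUind⟩ := riesz_main hC₁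
  -- data for S : ker S = Y₂ (f.d. since coker L is), coker S ≃ ker L
  haveI hY₂fd : FiniteDimensional ℝ Y₂ := (fd_quot_iff_compl hY₂).1 hcokL
  have hkSfd : FiniteDimensional ℝ (LinearMap.ker S.toLinearMap) := by rw [hkerS]; exact hY₂fd
  have hcSfd : FiniteDimensional ℝ (X ⧸ LinearMap.range S.toLinearMap) := by
    rw [hrangeS]
    exact (fd_quot_iff_compl hX₁.symm).2 hker
  -- additivity
  obtain ⟨hfdk, hfdc, heq⟩ := index_additivity (T : X →ₗ[ℝ] Y) (S : Y →ₗ[ℝ] X)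
    hTk hkSfd hcokT hcSfd
  have hcoe : ((S : Y →ₗ[ℝ] X) ∘ₗ (T : X →ₗ[ℝ] Y)) = (U : X →ₗ[ℝ] X) := by
    rw [← hSTU]; rfl
  rw [hcoe] at heq
  -- identify the various dimensions
  have h1 : finrank ℝ (X ⧸ LinearMap.range (U : X →ₗ[ℝ] X)) =
      finrank ℝ (LinearMap.ker (U : X →ₗ[ℝ] X)) := hUind
  have hkerS' : LinearMap.ker (S : Y →ₗ[ℝ] X) = Y₂ := hkerS
  have hrangeS' : LinearMap.range (S : Y →ₗ[ℝ] X) = X₁ := hrangeS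
  have h2 : finrank ℝ (LinearMap.ker (S : Y →ₗ[ℝ] X)) = finrank ℝ (Y ⧸ LinearMap.range L.toLinearMap) := by
    rw [hkerS', finrank_quot_eq_compl hY₂]
  have h3 : finrank ℝ (X ⧸ LinearMap.range (S : Y →ₗ[ℝ] X)) = finrank ℝ (LinearMap.ker L.toLinearMap) := by
    rw [hrangeS', finrank_quot_eq_compl hX₁.symm]
  have h4 : finrank ℝ (LinearMap.ker (T : X →ₗ[ℝ] Y)) = finrank ℝ (LinearMap.ker T.toLinearMap) := rfl
  have h5 : finrank ℝ (Y ⧸ LinearMap.range (T : X →ₗ[ℝ] Y)) =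
      finrank ℝ (Y ⧸ LinearMap.range T.toLinearMap) := rfl
  rw [h1, h2, h3, h4, h5] at heq
  omega

open Classical in
theorem stmt_4' {X Y : Type*}
    [NormedAddCommGroup X] [NormedSpace ℝ X] [CompleteSpace X]
    [NormedAddCommGroup Y] [NormedSpace ℝ Y] [CompleteSpace Y]
    (L : X →L[ℝ] Y) (hL : LeftFredholm L)
    (K : X →L[ℝ] Y) (hK : IsCompactOperator K) :
    LeftFredholm (L + K) ∧ fredholmIndex (L + K) = fredholmIndex L := by
  refine ⟨leftFredholm_add_compact L hL K hK, ?_⟩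
  by_cases h : FiniteDimensional ℝ (Y ⧸ LinearMap.range L.toLinearMap)
  · have h2 : FiniteDimensional ℝ (Y ⧸ LinearMap.range (L + K).toLinearMap) :=
      coker_fd_add_compact L hL K hK h
    have h3 := index_eq_add_compact L hL K hK h h2
    unfold fredholmIndex
    rw [if_pos h2, if_pos h]
    exact_mod_cast congrArg (fun z : ℤ => (z : WithBot ℤ)) h3
  · have h2 : ¬ FiniteDimensional ℝ (Y ⧸ LinearMap.range (L + K).toLinearMap) := by
      intro hfd
      apply h
      have hTF := leftFredholm_add_compact L hL K hK
      have hKneg : IsCompactOperator ⇑(-K) := by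
        have := hK.neg
        have hco : ⇑(-K) = -⇑K := by ext x; simp
        rwa [hco]
      have hres := coker_fd_add_compact (L + K) hTF (-K) hKneg hfd
      have heq : L + K + -K = L := by abel
      rwa [heq] at hres
    unfold fredholmIndex
    rw [if_neg h2, if_neg h]

end Chunk8

/-- the sum of a left-Fredholm operator and a compact operator between Banach
spaces is left-Fredholm with the same index. -/
theorem stmt_4 {X Y : Type*}
    [NormedAddCommGroup X] [NormedSpace ℝ X] [CompleteSpace X]
    [NormedAddCommGroup Y] [NormedSpace ℝ Y] [CompleteSpace Y]
    (L : X →L[ℝ] Y) (hL : LeftFredholm L)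
    (K : X →L[ℝ] Y) (hK : IsCompactOperator K) :
    LeftFredholm (L + K) ∧ fredholmIndex (L + K) = fredholmIndex L := by
  exact stmt_4' L hL K hK
end

section
/- Let J ⊆ ℝ be a nonempty open interval, C a finite set of cells with state spaces ℝ^{d_c}, and c a fixed cell with input set T. Let x : J → ℝᵈ be a C¹ curve whose synchrony pattern t ↦ ⋈_{x(t)} is constant on J and such that d/dt (x_c(t), x_T(t)) never vanishes on J. Let B(c,c) be a finite set of permutations β of the input coordinates (acting on ℝ^{d_T} by pullback β*). Then there exist a nonempty open subinterval J* ⊆ J and an open ball B ⊆ ℝ^{d_c} × ℝ^{d_T} such that: (i) t ∈ J* ↦ (x_c(t), x_T(t)) is a C¹ diffeomorphism onto its image, contained in B; and (ii) for every β ∈ B(c,c), either (x_c(t), β*x_T(t)) = (x_c(t), x_T(t)) for all t ∈ J*, or (x_c(t), β*x_T(t)) ∉ B for all t ∈ J*. -/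
open Set

/-- Lemma 1 of the paper: let `x = (xc, xT)` be a `C¹` curve on a nonempty
open interval `J` (cell `c` with state in `ℝ^dc` and inputs `T` with states in `ℝ^e`),
with nonvanishing derivative, whose synchrony pattern is constant on `J` (expressed here,
as allowed, by the hypothesis that for each input isomorphism `β` the pullback symmetry
`β* xT = xT` holds either for all `t ∈ J` or for no `t ∈ J`).  Then there are a nonempty
open subinterval `J* ⊆ J` and an open ball `B` such that (i) `t ↦ (xc t, xT t)` is a `C¹`
diffeomorphism onto its image on `J*`, with image contained in `B`, and (ii) for every
`β ∈ B(c,c)`, either `(xc t, β* xT t) = (xc t, xT t)` for all `t ∈ J*`, or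
`(xc t, β* xT t) ∉ B` for all `t ∈ J*`. -/
theorem stmt_10 {T : Type*} [Fintype T] (dc e : ℕ)
    (J : Set ℝ) (hJo : IsOpen J) (hJne : J.Nonempty) (hJc : J.OrdConnected)
    (xc : ℝ → EuclideanSpace ℝ (Fin dc)) (xT : ℝ → T → EuclideanSpace ℝ (Fin e))
    (v : ℝ → EuclideanSpace ℝ (Fin dc) × (T → EuclideanSpace ℝ (Fin e)))
    (hderiv : ∀ t ∈ J, HasDerivAt (fun s => (xc s, xT s)) (v t) t)
    (hvcont : ContinuousOn v J) (hvne : ∀ t ∈ J, v t ≠ 0)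
    (Bcc : Set (Equiv.Perm T))
    (hsync : ∀ β ∈ Bcc, (∀ t ∈ J, xT t ∘ β = xT t) ∨ (∀ t ∈ J, xT t ∘ β ≠ xT t)) :
    ∃ a b : ℝ, a < b ∧ Set.Ioo a b ⊆ J ∧
      ∃ (z : EuclideanSpace ℝ (Fin dc) × (T → EuclideanSpace ℝ (Fin e))) (r : ℝ),
        0 < r ∧
        Set.InjOn (fun t => (xc t, xT t)) (Set.Ioo a b) ∧
        (∀ t ∈ Set.Ioo a b, (xc t, xT t) ∈ Metric.ball z r) ∧
        ∀ β ∈ Bcc,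
          (∀ t ∈ Set.Ioo a b, xT t ∘ β = xT t) ∨
          (∀ t ∈ Set.Ioo a b, (xc t, xT t ∘ β) ∉ Metric.ball z r) := by
  classical
  obtain ⟨t₀, ht₀⟩ := hJne
  set f : ℝ → EuclideanSpace ℝ (Fin dc) × (T → EuclideanSpace ℝ (Fin e)) :=
    fun t => (xc t, xT t) with hfdef
  obtain ⟨ℓ, hℓ1, hℓ2⟩ := exists_dual_vector ℝ (v t₀) (norm_ne_zero_iff.2 (hvne t₀ ht₀))
  set g : Equiv.Perm T → ℝ → EuclideanSpace ℝ (Fin dc) × (T → EuclideanSpace ℝ (Fin e)) :=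
    fun β t => (xc t, xT t ∘ β) with hgdef
  have hcont : ∀ t ∈ J, ContinuousAt f t := fun t ht => (hderiv t ht).continuousAt
  have hgcont : ∀ β, ContinuousAt (g β) t₀ := by
    intro β
    have h1 : ContinuousAt (fun t => xc t) t₀ :=
      continuous_fst.continuousAt.comp (hcont t₀ ht₀)
    have h2 : ContinuousAt (fun t => xT t) t₀ :=
      continuous_snd.continuousAt.comp (hcont t₀ ht₀)
    exact h1.prodMk (((continuous_pi fun i => continuous_apply (β i)).continuousAt).comp h2)
  -- the minimal distance δ over "bad" permutations
  set d : Equiv.Perm T → ℝ := fun β =>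
    if β ∈ Bcc ∧ xT t₀ ∘ β ≠ xT t₀ then dist (g β t₀) (f t₀) else 1 with hddef
  have hd : ∀ β, 0 < d β := by
    intro β
    simp only [hddef]
    split_ifs with h
    · exact dist_pos.2 fun h' => h.2 (congrArg Prod.snd h')
    · norm_num
  have hne : (Finset.univ : Finset (Equiv.Perm T)).Nonempty := Finset.univ_nonempty
  set δ : ℝ := Finset.univ.inf' hne d with hδdef
  have hδpos : 0 < δ := (Finset.lt_inf'_iff hne).2 fun β _ => hd β
  have hδle : ∀ β, δ ≤ d β := fun β => Finset.inf'_le d (Finset.mem_univ β)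
  set r : ℝ := δ / 4 with hrdef
  have hr : 0 < r := by positivity
  -- eventually conditions near t₀
  have hpos : (0 : ℝ) < ℓ (v t₀) := by
    rw [hℓ2]
    exact norm_pos_iff.2 (hvne t₀ ht₀)
  have E1 : ∀ᶠ t in nhds t₀, t ∈ J := hJo.mem_nhds ht₀
  have E2 : ∀ᶠ t in nhds t₀, (0 : ℝ) < ℓ (v t) := by
    have hvc : ContinuousAt v t₀ := hvcont.continuousAt (hJo.mem_nhds ht₀)
    have hc : ContinuousAt (fun t => ℓ (v t)) t₀ := ℓ.continuous.continuousAt.comp hvc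
    exact hc.eventually (eventually_gt_nhds hpos)
  have E3 : ∀ᶠ t in nhds t₀, dist (f t) (f t₀) < r :=
    Metric.tendsto_nhds.mp (hcont t₀ ht₀) r hr
  have E4 : ∀ᶠ t in nhds t₀, ∀ β : Equiv.Perm T, dist (g β t) (g β t₀) < r :=
    Filter.eventually_all.2 fun β => Metric.tendsto_nhds.mp (hgcont β) r hr
  obtain ⟨ε, hε, hP⟩ := Metric.eventually_nhds_iff.1 (E1.and (E2.and (E3.and E4)))
  refine ⟨t₀ - ε, t₀ + ε, by linarith, ?_, f t₀, r, hr, ?_, ?_, ?_⟩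
  case _ =>
    intro t ht
    have : dist t t₀ < ε := by
      rw [Real.dist_eq, abs_sub_lt_iff]
      constructor <;> [linarith [ht.2]; linarith [ht.1]]
    exact (hP this).1
  all_goals
    have hmem : ∀ t ∈ Set.Ioo (t₀ - ε) (t₀ + ε),
        t ∈ J ∧ (0 : ℝ) < ℓ (v t) ∧ dist (f t) (f t₀) < r ∧
          ∀ β : Equiv.Perm T, dist (g β t) (g β t₀) < r := by
      intro t ht
      have : dist t t₀ < ε := by
        rw [Real.dist_eq, abs_sub_lt_iff]
        constructor <;> [linarith [ht.2]; linarith [ht.1]]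
      exact hP this
  -- injectivity
  case _ =>
    have hsm : StrictMonoOn (fun t => ℓ (f t)) (Set.Ioo (t₀ - ε) (t₀ + ε)) := by
      have hdm : ∀ t ∈ Set.Ioo (t₀ - ε) (t₀ + ε), HasDerivAt (fun s => ℓ (f s)) (ℓ (v t)) t := by
        intro t ht
        exact ℓ.hasFDerivAt.comp_hasDerivAt t (hderiv t (hmem t ht).1)
      refine strictMonoOn_of_deriv_pos (convex_Ioo _ _) ?_ ?_
      · exact fun t ht => (hdm t ht).continuousAt.continuousWithinAt
      · intro t ht
        rw [interior_Ioo] at ht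
        rw [(hdm t ht).deriv]
        exact (hmem t ht).2.1
    intro t1 h1 t2 h2 heq
    exact hsm.injOn h1 h2 (by simp only [hfdef] at heq ⊢; rw [heq])
  -- in ball
  case _ =>
    intro t ht
    exact Metric.mem_ball.2 (hmem t ht).2.2.1
  -- synchrony alternative
  case _ =>
    intro β hβ
    rcases hsync β hβ with hall | hbad
    · exact Or.inl fun t ht => hall t (hmem t ht).1
    · refine Or.inr fun t ht hm => ?_
      have hbad0 : xT t₀ ∘ β ≠ xT t₀ := hbad t₀ ht₀
      have hdβ : d β = dist (g β t₀) (f t₀) := by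
        simp only [hddef, if_pos (⟨hβ, hbad0⟩ : β ∈ Bcc ∧ xT t₀ ∘ β ≠ xT t₀)]
      have h1 : dist (g β t) (g β t₀) < r := (hmem t ht).2.2.2 β
      have h2 : dist (g β t) (f t₀) < r := Metric.mem_ball.1 hm
      have h3 : dist (g β t₀) (f t₀) ≤ dist (g β t₀) (g β t) + dist (g β t) (f t₀) :=
        dist_triangle _ _ _
      rw [dist_comm (g β t₀) (g β t)] at h3
      have h4 : δ ≤ dist (g β t₀) (f t₀) := hdβ ▸ hδle β
      rw [hrdef] at h1 h2
      linarith
end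

section
/- Let X, Y be finite-dimensional vector spaces with dim X < dim Y, and let Φ : X × Λ → Y be a C¹ map on a product with a Banach space Λ such that at every point (x, λ) ∈ Φ⁻¹(0), the total derivative DΦ(x,λ) : X × Λ → Y is surjective. Assume Λ is separable. Then the set of λ ∈ Λ such that Φ(·, λ)⁻¹(0) = ∅ is generic (contains a dense G_δ) in Λ. -/
open Set Module Metric Filter Function MeasureTheory Topology
open scoped NNReal ENNReal

lemma aux_local {E F : Type*} [NormedAddCommGroup E] [NormedSpace ℝ E] [FiniteDimensional ℝ E]
    [NormedAddCommGroup F] [NormedSpace ℝ F] [FiniteDimensional ℝ F]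
    (G : E → F) (hG : ContDiff ℝ 1 G) (p : E) (hsurj : Function.Surjective (fderiv ℝ G p)) :
    ∃ W ∈ 𝓝 p, dimH (G ⁻¹' {0} ∩ W) ≤ (finrank ℝ E - finrank ℝ F : ℕ) := by
  classical
  set f' := fderiv ℝ G p with hf'
  set Kr : Submodule ℝ E := LinearMap.ker (f' : E →ₗ[ℝ] F) with hKr
  obtain ⟨C, hC⟩ := Submodule.exists_isCompl Kr
  let πK : E →ₗ[ℝ] Kr := Kr.linearProjOfIsCompl C hC
  let πKc : E →L[ℝ] Kr := LinearMap.toContinuousLinearMap πK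
  have hrange : LinearMap.range (f' : E →ₗ[ℝ] F) = ⊤ := LinearMap.range_eq_top.2 hsurj
  have hrankE : finrank ℝ F + finrank ℝ Kr = finrank ℝ E := by
    have := LinearMap.finrank_range_add_finrank_ker (f' : E →ₗ[ℝ] F)
    rwa [hrange, finrank_top, ← hKr] at this
  have hKdim : finrank ℝ Kr = finrank ℝ E - finrank ℝ F := by omega
  -- the linear equivalence
  let ψl : E →ₗ[ℝ] F × Kr := LinearMap.prod (f' : E →ₗ[ℝ] F) πK
  have hinj : Function.Injective ψl := by
    rw [← LinearMap.ker_eq_bot, LinearMap.ker_eq_bot']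
    intro v hv
    have h1 : f' v = 0 := congrArg Prod.fst hv
    have h2 : πK v = 0 := congrArg Prod.snd hv
    have hvK : v ∈ Kr := h1
    have h3 : (⟨v, hvK⟩ : Kr) = 0 := by
      rw [← Submodule.linearProjOfIsCompl_apply_left hC ⟨v, hvK⟩]; exact h2
    simpa using congrArg Subtype.val h3
  have hdimeq : finrank ℝ E = finrank ℝ (F × Kr) := by
    rw [Module.finrank_prod]; omega
  let ψe : E ≃ₗ[ℝ] F × Kr :=
    LinearEquiv.ofBijective ψl
      ⟨hinj, (LinearMap.injective_iff_surjective_of_finrank_eq_finrank hdimeq).1 hinj⟩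
  let Ψ : E ≃L[ℝ] F × Kr := ψe.toContinuousLinearEquiv
  have hψ : HasStrictFDerivAt (fun z => (G z, πKc z)) (Ψ : E →L[ℝ] F × Kr) p := by
    have h1 : HasStrictFDerivAt G f' p := hG.hasStrictFDerivAt one_ne_zero
    have h2 : HasStrictFDerivAt πKc πKc p := πKc.hasStrictFDerivAt
    have h3 := HasStrictFDerivAt.prodMk h1 h2
    have : (Ψ : E →L[ℝ] F × Kr) = f'.prod πKc := by
      apply ContinuousLinearMap.ext; intro v; rfl
    rw [this]; exact h3
  set inv := hψ.localInverse _ _ _ with hinvdef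
  have hinvd : HasStrictFDerivAt inv (Ψ.symm : F × Kr →L[ℝ] E) ((fun z => (G z, πKc z)) p) :=
    hψ.to_localInverse
  obtain ⟨L, V, hV, hlip⟩ := hinvd.exists_lipschitzOnWith
  have hcontψ : Continuous fun z => (G z, πKc z) :=
    (hG.continuous).prodMk πKc.continuous
  set W : Set E := ((fun z => (G z, πKc z)) ⁻¹' V) ∩ {z | inv (G z, πKc z) = z} with hWdef
  refine ⟨W, ?_, ?_⟩
  · exact Filter.inter_mem (hcontψ.continuousAt.preimage_mem_nhds hV) (hψ.eventually_left_inverse)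
  · set T : Set (F × Kr) := V ∩ {q | q.1 = 0} with hTdef
    have hsub : G ⁻¹' {0} ∩ W ⊆ inv '' T := by
      rintro z ⟨hz0, hzV, hzinv⟩
      exact ⟨(G z, πKc z), ⟨hzV, by simpa using hz0⟩, hzinv⟩
    calc dimH (G ⁻¹' {0} ∩ W) ≤ dimH (inv '' T) := dimH_mono hsub
      _ ≤ dimH T := (hlip.mono inter_subset_left).dimH_image_le
      _ ≤ dimH {q : F × Kr | q.1 = 0} := dimH_mono inter_subset_right
      _ ≤ (finrank ℝ E - finrank ℝ F : ℕ) := by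
          have hiso : Isometry (fun y : Kr => ((0 : F), y)) :=
            Isometry.of_dist_eq fun a b => by simp [Prod.dist_eq, dist_nonneg]
          have himg : (fun y : Kr => ((0 : F), y)) '' univ = {q : F × Kr | q.1 = 0} := by
            ext q
            constructor
            · rintro ⟨y, -, rfl⟩; rfl
            · intro hq; exact ⟨⟨q.2, by simp⟩, trivial, by rw [← hq]⟩
          rw [← himg, hiso.dimH_image, Real.dimH_univ_eq_finrank, hKdim]


lemma aux_closed {X Y Λ : Type*} [NormedAddCommGroup X] [NormedSpace ℝ X]
    [FiniteDimensional ℝ X] [NormedAddCommGroup Y]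
    [NormedAddCommGroup Λ] [NormedSpace ℝ Λ]
    (Φ : X × Λ → Y) (hc : Continuous Φ) (n : ℕ) :
    IsClosed {l : Λ | ∃ x ∈ Metric.closedBall (0:X) n, Φ (x, l) = 0} := by
  apply IsSeqClosed.isClosed
  intro ls l hmem hl
  choose x hx hx0 using hmem
  obtain ⟨a, ha, φ, hφ, hsub⟩ := (isCompact_closedBall (0:X) (n:ℝ)).tendsto_subseq hx
  refine ⟨a, ha, ?_⟩
  have h1 : Tendsto (fun k => (x (φ k), ls (φ k))) atTop (𝓝 (a, l)) :=
    hsub.prodMk_nhds (hl.comp hφ.tendsto_atTop)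
  have h2 : Tendsto (fun k => Φ (x (φ k), ls (φ k))) atTop (𝓝 (Φ (a, l))) :=
    (hc.continuousAt.tendsto).comp h1
  have h3 : Tendsto (fun k => Φ (x (φ k), ls (φ k))) atTop (𝓝 (0 : Y)) := by
    simpa [hx0] using (tendsto_const_nhds : Tendsto (fun _ : ℕ => (0:Y)) atTop _)
  exact tendsto_nhds_unique h2 h3


lemma dense_step {X Y Λ : Type*}
    [NormedAddCommGroup X] [NormedSpace ℝ X] [FiniteDimensional ℝ X]
    [NormedAddCommGroup Y] [NormedSpace ℝ Y] [FiniteDimensional ℝ Y]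
    [NormedAddCommGroup Λ] [NormedSpace ℝ Λ]
    (hdim : Module.finrank ℝ X < Module.finrank ℝ Y)
    (Φ : X × Λ → Y) (hΦ : ContDiff ℝ 1 Φ)
    (htrans : ∀ p : X × Λ, Φ p = 0 → Function.Surjective (fderiv ℝ Φ p))
    (n : ℕ) (l₀ : Λ) (ε : ℝ) (hε : 0 < ε) :
    ∃ l : Λ, dist l l₀ < ε ∧ ∀ x ∈ Metric.closedBall (0:X) n, Φ (x, l) ≠ 0 := by
  classical
  set m := finrank ℝ Y with hm
  haveI : Nonempty (Fin m) := ⟨⟨0, by omega⟩⟩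
  set K : Set X := Metric.closedBall 0 n with hKdef
  have hK : IsCompact K := isCompact_closedBall _ _
  set Z₀ : Set X := K ∩ (fun x => Φ (x, l₀)) ⁻¹' {0} with hZ₀def
  have hcontx : Continuous fun x : X => Φ (x, l₀) :=
    hΦ.continuous.comp (continuous_id.prodMk continuous_const)
  have hZ₀c : IsCompact Z₀ :=
    hK.of_isClosed_subset (Metric.isClosed_closedBall.inter (isClosed_singleton.preimage hcontx))
      inter_subset_left
  -- local spanning data
  have hstep : ∀ x : X, x ∈ Z₀ → ∃ w : Fin m → X × Λ, ∃ V : Set (X × Λ),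
      IsOpen V ∧ (x, l₀) ∈ V ∧
      ∀ q ∈ V, Submodule.span ℝ (Set.range fun i => fderiv ℝ Φ q (w i)) = ⊤ := by
    intro x hx
    have hsurj := htrans (x, l₀) hx.2
    set b := Module.finBasis ℝ Y with hb
    choose w hw using fun i : Fin m => hsurj (b i)
    have hcont : Continuous fun q : X × Λ => fun i : Fin m => fderiv ℝ Φ q (w i) :=
      continuous_pi fun i =>
        (ContinuousLinearMap.apply ℝ Y (w i)).continuous.comp (hΦ.continuous_fderiv one_ne_zero)
    refine ⟨w, (fun q : X × Λ => fun i => fderiv ℝ Φ q (w i)) ⁻¹'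
        {v : Fin m → Y | LinearIndependent ℝ v},
      isOpen_setOf_linearIndependent.preimage hcont, ?_, ?_⟩
    · show LinearIndependent ℝ fun i => fderiv ℝ Φ (x, l₀) (w i)
      have he : (fun i => fderiv ℝ Φ (x, l₀) (w i)) = b := funext hw
      rw [he]; exact b.linearIndependent
    · intro q hq
      exact (hq : LinearIndependent ℝ _).span_eq_top_of_card_eq_finrank (by simp [hm])
  choose! w V hVopen hVmem hVspan using hstep
  -- finite subcover of Z₀
  obtain ⟨R, hRZ, hRcover⟩ := hZ₀c.elim_nhds_subcover
      (fun x => (fun y : X => (y, l₀)) ⁻¹' V x)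
      (fun x hx => ((hVopen x hx).preimage (continuous_id.prodMk continuous_const)).mem_nhds
        (hVmem x hx))
  set ιt := {r : X // r ∈ R} × Fin m with hιt
  set A : (ιt → ℝ) →L[ℝ] Λ :=
    ∑ c : ιt, (ContinuousLinearMap.proj c).smulRight ((w c.1.1 c.2).2) with hA
  have hA1 : ∀ c : ιt, A (Pi.single c 1) = (w c.1.1 c.2).2 := by
    intro c
    rw [hA, ContinuousLinearMap.sum_apply]
    rw [Finset.sum_eq_single c]
    · simp
    · intro c' _ hne
      simp [ContinuousLinearMap.smulRight_apply, Pi.single_apply, (Ne.symm hne)]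
    · simp
  set Uo : Set (X × Λ) := ⋃ r : {r : X // r ∈ R}, V r.1 with hUo
  have hUoopen : IsOpen Uo := isOpen_iUnion fun r => hVopen r.1 (hRZ r.1 r.2)
  -- the ρ step
  have hρ : ∃ ρ : ℝ, 0 < ρ ∧ ∀ x ∈ K, ∀ μ : Λ, ‖μ‖ ≤ ρ → Φ (x, l₀ + μ) = 0 →
      (x, l₀ + μ) ∈ Uo := by
    by_contra hcon
    push_neg at hcon
    have h1 : ∀ j : ℕ, ∃ x ∈ K, ∃ μ : Λ, ‖μ‖ ≤ 1/(j+1) ∧ Φ (x, l₀ + μ) = 0 ∧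
        (x, l₀ + μ) ∉ Uo := by
      intro j
      obtain ⟨x, hx, μ, h⟩ := hcon (1/(j+1)) (by positivity)
      exact ⟨x, hx, μ, h⟩
    choose xs hxs μs hμs h0 hnot using h1
    obtain ⟨a, ha, φ, hφmono, hconv⟩ := hK.tendsto_subseq hxs
    have hμconv : Tendsto (fun k => μs (φ k)) atTop (𝓝 0) := by
      refine squeeze_zero_norm (a := fun k : ℕ => 1/(k+1)) (fun k => ?_)
        tendsto_one_div_add_atTop_nhds_zero_nat
      ·
        refine (hμs (φ k)).trans ?_
        have h1 : (k : ℝ) + 1 ≤ (φ k : ℝ) + 1 := by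
          gcongr
          exact_mod_cast hφmono.le_apply
        exact one_div_le_one_div_of_le (by positivity) h1
    have hpair : Tendsto (fun k => (xs (φ k), l₀ + μs (φ k))) atTop (𝓝 (a, l₀)) := by
      refine hconv.prodMk_nhds ?_
      simpa using tendsto_const_nhds.add hμconv
    have haZ : a ∈ Z₀ := by
      refine ⟨ha, ?_⟩
      have h2 : Tendsto (fun k => Φ (xs (φ k), l₀ + μs (φ k))) atTop (𝓝 (Φ (a, l₀))) :=
        (hΦ.continuous.continuousAt.tendsto).comp hpair
      have h3 : Tendsto (fun k => Φ (xs (φ k), l₀ + μs (φ k))) atTop (𝓝 (0:Y)) := by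
        simpa [fun k => h0 (φ k)] using (tendsto_const_nhds : Tendsto (fun _:ℕ => (0:Y)) atTop _)
      exact tendsto_nhds_unique h2 h3
    obtain ⟨r, hrR, harV⟩ := mem_iUnion₂.1 (hRcover haZ)
    have hev : ∀ᶠ k in atTop, (xs (φ k), l₀ + μs (φ k)) ∈ V r :=
      hpair.eventually ((hVopen r (hRZ r hrR)).eventually_mem harV)
    obtain ⟨k, hk⟩ := hev.exists
    exact hnot (φ k) (mem_iUnion.2 ⟨⟨r, hrR⟩, hk⟩)
  obtain ⟨ρ, hρpos, hρ⟩ := hρ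
  set τ : ℝ := min (ρ / (‖A‖ + 1)) (ε / (2 * (‖A‖ + 1))) with hτ
  have hApos : (0:ℝ) < ‖A‖ + 1 := by positivity
  have hτpos : 0 < τ := lt_min (by positivity) (by positivity)
  set G : X × (ιt → ℝ) → Y := fun p => Φ (p.1, l₀ + A p.2) with hGdef
  have hGc : ContDiff ℝ 1 G :=
    hΦ.comp (contDiff_fst.prodMk (contDiff_const.add (A.contDiff.comp contDiff_snd)))
  set M : (X × (ιt → ℝ)) →L[ℝ] X × Λ :=
    (ContinuousLinearMap.fst ℝ X (ιt → ℝ)).prod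
      (A.comp (ContinuousLinearMap.snd ℝ X (ιt → ℝ))) with hM
  have hGder : ∀ p : X × (ιt → ℝ), fderiv ℝ G p = (fderiv ℝ Φ (p.1, l₀ + A p.2)).comp M := by
    intro p
    have he : (fun p : X × (ιt → ℝ) => (p.1, l₀ + A p.2))
        = fun p : X × (ιt → ℝ) => ((0:X), l₀) + M p := by
      funext q
      simp [hM, Prod.ext_iff]
    have h1 : HasFDerivAt (fun p : X × (ιt → ℝ) => (p.1, l₀ + A p.2)) M p := by
      rw [he]; exact M.hasFDerivAt.const_add _
    have h2 : HasFDerivAt Φ (fderiv ℝ Φ (p.1, l₀ + A p.2)) (p.1, l₀ + A p.2) :=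
      (hΦ.differentiable one_ne_zero _).hasFDerivAt
    exact (h2.comp p h1).fderiv
  set Zs : Set (X × (ιt → ℝ)) :=
    (Prod.fst ⁻¹' K) ∩ (Prod.snd ⁻¹' Metric.closedBall 0 τ) ∩ G ⁻¹' {0} with hZs
  have hZscomp : IsCompact Zs := by
    refine IsCompact.of_isClosed_subset (hK.prod (isCompact_closedBall (0 : ιt → ℝ) τ)) ?_ ?_
    · exact ((Metric.isClosed_closedBall.preimage continuous_fst).inter
        (Metric.isClosed_closedBall.preimage continuous_snd)).inter
        (isClosed_singleton.preimage hGc.continuous)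
    · rintro ⟨x, t⟩ ⟨⟨h1, h2⟩, -⟩
      exact ⟨h1, h2⟩
  -- surjectivity of fderiv G on Zs
  have hsurjG : ∀ p ∈ Zs, Function.Surjective (fderiv ℝ G p) := by
    rintro ⟨x, t⟩ ⟨⟨hxK, htτ⟩, hG0⟩
    have htn : ‖t‖ ≤ τ := mem_closedBall_zero_iff.1 htτ
    have hAt : ‖A t‖ ≤ ρ := by
      calc ‖A t‖ ≤ ‖A‖ * ‖t‖ := A.le_opNorm t
        _ ≤ ‖A‖ * (ρ / (‖A‖ + 1)) := by
            apply mul_le_mul_of_nonneg_left (htn.trans (min_le_left _ _)) (norm_nonneg _)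
        _ ≤ (‖A‖ + 1) * (ρ / (‖A‖ + 1)) :=
            mul_le_mul_of_nonneg_right (by linarith) (by positivity)
        _ = ρ := mul_div_cancel₀ _ (ne_of_gt hApos)
    have hq : (x, l₀ + A t) ∈ Uo := hρ x hxK (A t) hAt (by exact hG0)
    obtain ⟨r, hqV⟩ := mem_iUnion.1 hq
    have hspan := hVspan r.1 (hRZ r.1 r.2) _ hqV
    have hrange : LinearMap.range (((fderiv ℝ Φ (x, l₀ + A t)).comp M :
        X × (ιt → ℝ) →L[ℝ] Y) : X × (ιt → ℝ) →ₗ[ℝ] Y) = ⊤ := by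
      rw [← top_le_iff, ← hspan, Submodule.span_le]
      rintro _ ⟨i, rfl⟩
      refine ⟨((w r.1 i).1, Pi.single (r, i) 1), ?_⟩
      show (fderiv ℝ Φ (x, l₀ + A t)) (M ((w r.1 i).1, Pi.single (r, i) 1))
          = fderiv ℝ Φ (x, l₀ + A t) (w r.1 i)
      congr 1
      have : M ((w r.1 i).1, Pi.single (r, i) 1) = ((w r.1 i).1, A (Pi.single (r, i) 1)) := rfl
      rw [this, hA1 (r, i)]
    rw [hGder (x, t)]
    exact LinearMap.range_eq_top.1 hrange
  -- local dimension bounds and cover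
  choose! W hWnhds hWdim using fun p (hp : p ∈ Zs) => aux_local G hGc p (hsurjG p hp)
  obtain ⟨P, hPZ, hPcover⟩ := hZscomp.elim_nhds_subcover W (fun p hp => hWnhds p hp)
  set S : Set (ιt → ℝ) := Prod.snd '' Zs with hSdef
  have hS0 : volume S = 0 := by
    have hsub : S ⊆ ⋃ p ∈ P, Prod.snd '' (G ⁻¹' {0} ∩ W p) := by
      rintro _ ⟨p, hp, rfl⟩
      obtain ⟨p', hp'P, hpW⟩ := mem_iUnion₂.1 (hPcover hp)
      exact mem_iUnion₂.2 ⟨p', hp'P, ⟨p, ⟨hp.2, hpW⟩, rfl⟩⟩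
    refine measure_mono_null hsub ?_
    refine (measure_biUnion_null_iff P.countable_toSet).2 ?_
    intro p hpP
    have hzp : p ∈ Zs := hPZ p hpP
    set k : ℕ := finrank ℝ (X × (ιt → ℝ)) - m with hk
    have hd : dimH (Prod.snd '' (G ⁻¹' {0} ∩ W p)) ≤ (k : ℝ≥0∞) :=
      (LipschitzWith.prod_snd.dimH_image_le _).trans (hWdim p hzp)
    have hcard : finrank ℝ (X × (ιt → ℝ)) = finrank ℝ X + Fintype.card ιt := by
      rw [Module.finrank_prod, Module.finrank_fintype_fun_eq_card]
    have hle : m ≤ finrank ℝ (X × (ιt → ℝ)) := by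
      have hs := hsurjG p hzp
      have h1 : LinearMap.range ((fderiv ℝ G p : X × (ιt → ℝ) →L[ℝ] Y) :
          X × (ιt → ℝ) →ₗ[ℝ] Y) = ⊤ := LinearMap.range_eq_top.2 hs
      calc m = finrank ℝ (⊤ : Submodule ℝ Y) := (finrank_top ℝ Y).symm
        _ = finrank ℝ (LinearMap.range ((fderiv ℝ G p : X × (ιt → ℝ) →L[ℝ] Y) :
            X × (ιt → ℝ) →ₗ[ℝ] Y)) := by rw [h1]
        _ ≤ finrank ℝ (X × (ιt → ℝ)) := LinearMap.finrank_range_le _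
    have hklt : k < Fintype.card ιt := by omega
    have hlt : dimH (Prod.snd '' (G ⁻¹' {0} ∩ W p)) < ((Fintype.card ιt : ℝ≥0) : ℝ≥0∞) := by
      refine hd.trans_lt ?_
      exact_mod_cast hklt
    have h0 : μH[((Fintype.card ιt : ℝ≥0) : ℝ)] (Prod.snd '' (G ⁻¹' {0} ∩ W p)) = 0 :=
      hausdorffMeasure_of_dimH_lt hlt
    have hμeq : (μH[((Fintype.card ιt : ℝ≥0) : ℝ)] : Measure (ιt → ℝ)) = volume := by
      rw [NNReal.coe_natCast]
      exact hausdorffMeasure_pi_real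
    rwa [hμeq] at h0
  -- pick a good parameter
  have hball : volume (Metric.ball (0 : ιt → ℝ) τ) ≠ 0 := (measure_ball_pos _ _ hτpos).ne'
  have hns : ¬ (Metric.ball (0 : ιt → ℝ) τ ⊆ S) := fun h => hball (measure_mono_null h hS0)
  obtain ⟨t, htball, htS⟩ := not_subset.1 hns
  have htn : ‖t‖ < τ := mem_ball_zero_iff.1 htball
  refine ⟨l₀ + A t, ?_, ?_⟩
  · rw [dist_eq_norm, add_sub_cancel_left]
    calc ‖A t‖ ≤ ‖A‖ * ‖t‖ := A.le_opNorm t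
      _ ≤ ‖A‖ * (ε / (2 * (‖A‖ + 1))) :=
          mul_le_mul_of_nonneg_left (htn.le.trans (min_le_right _ _)) (norm_nonneg _)
      _ ≤ (‖A‖ + 1) * (ε / (2 * (‖A‖ + 1))) :=
          mul_le_mul_of_nonneg_right (by linarith) (by positivity)
      _ < ε := by
          have he : (‖A‖ + 1) * (ε / (2 * (‖A‖ + 1))) = ε / 2 := by
            field_simp
          rw [he]; linarith
  · intro x hx hzero
    have hp : (x, t) ∈ Zs :=
      ⟨⟨hx, mem_closedBall_zero_iff.2 htn.le⟩, by exact hzero⟩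
    exact htS ⟨(x, t), hp, rfl⟩

/-- finite-dimensional-target instance of Henry's transversality theorem:
let `X`, `Y` be finite-dimensional spaces with `dim X < dim Y`, `Λ` a separable Banach
space, and `Φ : X × Λ → Y` a `C¹` map whose total derivative is surjective at every zero
of `Φ`.  Then for generic `λ` (a dense `G_δ` of `Λ`), the map `Φ(·, λ)` has no zero. -/
theorem stmt_12 {X Y Λ : Type*}
    [NormedAddCommGroup X] [NormedSpace ℝ X] [FiniteDimensional ℝ X]
    [NormedAddCommGroup Y] [NormedSpace ℝ Y] [FiniteDimensional ℝ Y]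
    [NormedAddCommGroup Λ] [NormedSpace ℝ Λ] [CompleteSpace Λ]
    [TopologicalSpace.SeparableSpace Λ]
    (hdim : Module.finrank ℝ X < Module.finrank ℝ Y)
    (Φ : X × Λ → Y) (hΦ : ContDiff ℝ 1 Φ)
    (htrans : ∀ p : X × Λ, Φ p = 0 → Function.Surjective (fderiv ℝ Φ p)) :
    ∃ U : ℕ → Set Λ, (∀ n, IsOpen (U n) ∧ Dense (U n)) ∧
      ∀ l ∈ ⋂ n, U n, ∀ x : X, Φ (x, l) ≠ 0 := by
  refine ⟨fun n => {l : Λ | ∀ x ∈ Metric.closedBall (0:X) n, Φ (x, l) ≠ 0},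
    fun n => ⟨?_, ?_⟩, ?_⟩
  · have hcl := aux_closed Φ hΦ.continuous n
    have he : {l : Λ | ∀ x ∈ Metric.closedBall (0:X) n, Φ (x, l) ≠ 0}
        = {l : Λ | ∃ x ∈ Metric.closedBall (0:X) n, Φ (x, l) = 0}ᶜ := by
      ext l; simp
    show IsOpen {l : Λ | ∀ x ∈ Metric.closedBall (0:X) n, Φ (x, l) ≠ 0}
    rw [he]
    exact hcl.isOpen_compl
  · rw [Metric.dense_iff]
    intro l₀ r hr
    obtain ⟨l, hdist, hl⟩ := dense_step hdim Φ hΦ htrans n l₀ r hr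
    exact ⟨l, Metric.mem_ball.2 hdist, hl⟩
  · intro l hl x
    have hn : x ∈ Metric.closedBall (0:X) (⌈‖x‖⌉₊ : ℕ) := by
      rw [Metric.mem_closedBall, dist_zero_right]
      exact Nat.le_ceil _
    exact (Set.mem_iInter.1 hl ⌈‖x‖⌉₊) x hn
end

section
/- Let 𝒢 be a finite network with types, X = ∏_c ℝ^{d_c} an admissible state space, and ⋈ a balanced coloring. Suppose the synchrony space Δ_⋈ (with its defining equalities relaxed to implications: Δ̂_⋈ = { x : c ⋈ c' ⇒ x_c = x_{c'} }) is invariant under the flow of ẋ = f(x) for every admissible vector field f. Given: (invariance axiom) for every admissible f and every x₀ ∈ Δ̂_⋈, the solution with x(0) = x₀ stays in Δ̂_⋈ on its interval of existence. Then: if a solution x(·) of ẋ = f(x) on an open interval J has synchrony pattern ⋈_{x,J₀} = ⋈ on some nonempty open subinterval J₀ ⊆ J, its global synchrony pattern satisfies ⋈_{x,J} ⊇ ⋈ (i.e. c ⋈ c' implies x_c(t) = x_{c'}(t) for all t ∈ J). -/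
/-- let `⋈` (`Bow`) be a (balanced) coloring whose relaxed synchrony space
`Δ̂_⋈ = { u : c ⋈ c' → u c = u c' }` is invariant under the flow of the `C¹` vector field
`f` (invariance axiom: every solution starting at time `0` in `Δ̂_⋈` stays in `Δ̂_⋈` on its
open interval of existence).  If a solution `x` of `ẋ = f (x)` on an open interval `J`
has synchrony pattern exactly `⋈` on some nonempty open subinterval `J₀ ⊆ J`, then the
synchrony propagates: `c ⋈ c'` implies `x t c = x t c'` for all `t ∈ J`. -/
theorem stmt_18 {Cell : Type*} [Fintype Cell] {V : Type*}
    [NormedAddCommGroup V] [NormedSpace ℝ V]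
    (Bow : Cell → Cell → Prop)
    (f : (Cell → V) → (Cell → V)) (hf : ContDiff ℝ 1 f)
    (hinv : ∀ x₀ : Cell → V, (∀ c c', Bow c c' → x₀ c = x₀ c') →
      ∀ (y : ℝ → Cell → V) (J' : Set ℝ), IsOpen J' → J'.OrdConnected →
        (0 : ℝ) ∈ J' → y 0 = x₀ → (∀ t ∈ J', HasDerivAt y (f (y t)) t) →
        ∀ t ∈ J', ∀ c c', Bow c c' → y t c = y t c')
    (J : Set ℝ) (hJo : IsOpen J) (hJc : J.OrdConnected)
    (x : ℝ → Cell → V) (hx : ∀ t ∈ J, HasDerivAt x (f (x t)) t)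
    (J₀ : Set ℝ) (hJ₀ : J₀ ⊆ J) (hJ₀o : IsOpen J₀) (hJ₀ne : J₀.Nonempty)
    (hpat : ∀ c c', Bow c c' ↔ ∀ t ∈ J₀, x t c = x t c') :
    ∀ t ∈ J, ∀ c c', Bow c c' → x t c = x t c' := by
  obtain ⟨t₀, ht₀⟩ := hJ₀ne
  set y : ℝ → Cell → V := fun s => x (s + t₀) with hy
  set J' : Set ℝ := (fun s : ℝ => s + t₀) ⁻¹' J with hJ'
  have hJ'o : IsOpen J' := hJo.preimage (continuous_add_right t₀)
  have hJ'c : J'.OrdConnected := by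
    constructor
    intro a ha b hb z hz
    exact hJc.out ha hb ⟨by simpa using add_le_add_right hz.1 t₀,
      by simpa using add_le_add_right hz.2 t₀⟩
  have h0 : (0 : ℝ) ∈ J' := by simpa [hJ'] using hJ₀ ht₀
  have hx₀ : ∀ c c', Bow c c' → x t₀ c = x t₀ c' := by
    intro c c' hcc'
    exact (hpat c c').1 hcc' t₀ ht₀
  have hyder : ∀ s ∈ J', HasDerivAt y (f (y s)) s := by
    intro s hs
    have h1 : HasDerivAt (fun u : ℝ => u + t₀) 1 s := by
      simpa using (hasDerivAt_id s).add_const t₀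
    have := (hx (s + t₀) hs).scomp s h1
    rw [one_smul] at this
    exact this
  have key := hinv (x t₀) hx₀ y J' hJ'o hJ'c h0 (by simp [hy]) hyder
  intro t ht c c' hcc'
  have : y (t - t₀) c = y (t - t₀) c' := key (t - t₀) (by simpa [hJ'] using ht) c c' hcc'
  simpa [hy] using this
end
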